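/- arXiv:quant-ph/0206053 — 5 statements merged into one kernel-verified Lean document; each statement's English description precedes it below -/
import Mathlib

section
/- Let l, m ≥ 0 be integers with l ∧ m = min{l,m} ≥ 1 and n = l + m. Then Ξ(l,m) = a^l · (conj a)^m · Δ^m · Σ_{γ=1}^{l∧m} (−|b|²/|a|²)^γ · C(l−1, γ−1) · C(m−1, γ−1) · [ ((l−γ)/(aγ))·P + ((m−γ)/(Δ·(conj a)·γ))·Q − (1/(Δ·(conj b)))·R + (1/b)·S ], where C(n,k) denotes the binomial coefficient and Δ = ad − bc. -/
open Matrix Finset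
open scoped Classical

noncomputable section

/-- `Xi P Q l m` is the sum, over all words of length `l + m` in the letters `P`, `Q`
with exactly `l` occurrences of `P` and `m` occurrences of `Q`, of the ordered product. -/
def Xi (P Q : Matrix (Fin 2) (Fin 2) ℂ) (l m : ℕ) : Matrix (Fin 2) (Fin 2) ℂ :=
  ∑ w ∈ Finset.univ.filter
      (fun w : Fin (l + m) → Bool => (Finset.univ.filter fun i => w i = true).card = m),
    (List.ofFn fun i => if w i then Q else P).prod

/-! ### Auxiliary definitions and lemmas -/

/-- Like `Xi`, but with the word length `n` decoupled from the number of `Q`s. -/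
def Xi' (P Q : Matrix (Fin 2) (Fin 2) ℂ) (n m : ℕ) : Matrix (Fin 2) (Fin 2) ℂ :=
  ∑ w ∈ Finset.univ.filter
      (fun w : Fin n → Bool => (Finset.univ.filter fun i => w i = true).card = m),
    (List.ofFn fun i => if w i then Q else P).prod

lemma Xi'_zero_zero (P Q : Matrix (Fin 2) (Fin 2) ℂ) : Xi' P Q 0 0 = 1 := by
  simp [Xi']

lemma Xi'_of_lt (P Q : Matrix (Fin 2) (Fin 2) ℂ) {n m : ℕ} (h : n < m) : Xi' P Q n m = 0 := by
  rw [Xi', Finset.filter_false_of_mem, Finset.sum_empty]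
  intro w _
  have := Finset.card_filter_le (Finset.univ : Finset (Fin n)) (fun i => w i = true)
  simp only [Finset.card_univ, Fintype.card_fin] at this
  omega

lemma count_cons (n : ℕ) (x : Bool) (w : Fin n → Bool) :
    (Finset.univ.filter fun i => (Fin.cons x w : Fin (n+1) → Bool) i = true).card
      = (if x then 1 else 0) + (Finset.univ.filter fun i => w i = true).card := by
  rw [Finset.card_filter, Finset.card_filter, Fin.sum_univ_succ]
  simp [Fin.cons_zero, Fin.cons_succ]

lemma prod_cons (P Q : Matrix (Fin 2) (Fin 2) ℂ) (n : ℕ) (x : Bool) (w : Fin n → Bool) :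
    (List.ofFn fun i : Fin (n+1) => if (Fin.cons x w : Fin (n+1) → Bool) i then Q else P).prod
      = (if x then Q else P) * (List.ofFn fun i => if w i then Q else P).prod := by
  rw [List.ofFn_succ]
  simp [Fin.cons_zero, Fin.cons_succ]

lemma Xi'_split (P Q : Matrix (Fin 2) (Fin 2) ℂ) (n m : ℕ) :
    Xi' P Q (n+1) m
      = (∑ w ∈ Finset.univ.filter
          (fun w : Fin n → Bool => 1 + (Finset.univ.filter fun i => w i = true).card = m),
          Q * (List.ofFn fun i => if w i then Q else P).prod)
      + (∑ w ∈ Finset.univ.filter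
          (fun w : Fin n → Bool => (Finset.univ.filter fun i => w i = true).card = m),
          P * (List.ofFn fun i => if w i then Q else P).prod) := by
  rw [Xi', Finset.sum_filter,
    ← Equiv.sum_comp (Fin.consEquiv fun _ : Fin (n+1) => Bool)
      (fun w : Fin (n+1) → Bool =>
        if (Finset.univ.filter fun i => w i = true).card = m
        then (List.ofFn fun i => if w i then Q else P).prod else 0)]
  rw [Fintype.sum_prod_type, Fintype.sum_bool]
  simp only [Fin.consEquiv_apply, count_cons, prod_cons]
  rw [Finset.sum_filter, Finset.sum_filter]
  simp

lemma Xi'_succ_succ (P Q : Matrix (Fin 2) (Fin 2) ℂ) (n m : ℕ) :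
    Xi' P Q (n+1) (m+1) = Q * Xi' P Q n m + P * Xi' P Q n (m+1) := by
  rw [Xi'_split, Xi', Xi', Finset.mul_sum, Finset.mul_sum]
  congr 2
  ext w
  simp only [Finset.mem_filter, Finset.mem_univ, true_and]
  omega

lemma Xi'_succ_zero (P Q : Matrix (Fin 2) (Fin 2) ℂ) (n : ℕ) :
    Xi' P Q (n+1) 0 = P * Xi' P Q n 0 := by
  rw [Xi'_split, Xi', Finset.mul_sum]
  rw [Finset.filter_false_of_mem (by intro w _; omega), Finset.sum_empty, zero_add]

lemma Xi'_n_zero (P Q : Matrix (Fin 2) (Fin 2) ℂ) : ∀ n, Xi' P Q n 0 = P ^ n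
  | 0 => by simpa using Xi'_zero_zero P Q
  | (n+1) => by rw [Xi'_succ_zero, Xi'_n_zero P Q n, pow_succ']

lemma Xi'_n_n (P Q : Matrix (Fin 2) (Fin 2) ℂ) : ∀ n, Xi' P Q n n = Q ^ n
  | 0 => by simpa using Xi'_zero_zero P Q
  | (n+1) => by
      rw [Xi'_succ_succ, Xi'_n_n P Q n, Xi'_of_lt P Q (by omega), mul_zero, add_zero, pow_succ']

/-! ### Scalar sums -/

lemma sum_ext_choose (f : ℕ → ℂ) {K N : ℕ} (h : ∀ δ, K ≤ δ → f δ = 0) (hN : K ≤ N) :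
    ∑ δ ∈ range N, f δ = ∑ δ ∈ range K, f δ :=
  (Finset.sum_subset (Finset.range_subset_range.2 hN)
    (fun i _ hi => h i (by simpa using hi))).symm

def Ssum (x : ℂ) (l m : ℕ) : ℂ := ∑ δ ∈ range (l+1), x^δ * (l.choose δ) * (m.choose δ)
def Asum (x : ℂ) (l m : ℕ) : ℂ := ∑ δ ∈ range (l+1), x^δ * (l.choose (δ+1)) * (m.choose δ)
def Bsum (x : ℂ) (l m : ℕ) : ℂ := ∑ δ ∈ range (m+1), x^δ * (l.choose δ) * (m.choose (δ+1))

lemma Ssum_eq (x : ℂ) (l m N : ℕ) (hN : l+1 ≤ N) :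
    Ssum x l m = ∑ δ ∈ range N, x^δ * (l.choose δ) * (m.choose δ) :=
  (sum_ext_choose _ (fun δ hδ => by
    rw [Nat.choose_eq_zero_of_lt (show l < δ by omega)]; simp) hN).symm

lemma Asum_eq (x : ℂ) (l m N : ℕ) (hN : l+1 ≤ N) :
    Asum x l m = ∑ δ ∈ range N, x^δ * (l.choose (δ+1)) * (m.choose δ) :=
  (sum_ext_choose _ (fun δ hδ => by
    rw [Nat.choose_eq_zero_of_lt (show l < δ+1 by omega)]; simp) hN).symm

lemma Ssum_comm (x : ℂ) (l m : ℕ) : Ssum x l m = Ssum x m l := by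
  rw [Ssum_eq x l m (l+m+1) (by omega), Ssum_eq x m l (l+m+1) (by omega)]
  exact Finset.sum_congr rfl fun δ _ => by ring

lemma Bsum_eq_Asum (x : ℂ) (l m : ℕ) : Bsum x l m = Asum x m l := by
  rw [Bsum, Asum]
  exact Finset.sum_congr rfl fun δ _ => by ring

lemma Asum_zero (x : ℂ) (m : ℕ) : Asum x 0 m = 0 := by simp [Asum]
lemma Bsum_zero (x : ℂ) (l : ℕ) : Bsum x l 0 = 0 := by simp [Bsum]
lemma Ssum_zero_r (x : ℂ) (l : ℕ) : Ssum x l 0 = 1 := by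
  rw [Ssum, Finset.sum_eq_single 0]
  · simp
  · intro δ _ hδ
    rw [Nat.choose_eq_zero_of_lt (show 0 < δ by omega)]; simp
  · simp
lemma Ssum_zero_l (x : ℂ) (m : ℕ) : Ssum x 0 m = 1 := by simp [Ssum]

lemma J1 (x : ℂ) (l m : ℕ) : Asum x (l+1) m = Asum x l m + Ssum x l m := by
  rw [Asum, Asum_eq x l m (l+2) (by omega), Ssum_eq x l m (l+2) (by omega),
    ← Finset.sum_add_distrib]
  refine Finset.sum_congr rfl fun δ _ => ?_
  rw [Nat.choose_succ_succ l δ]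
  push_cast
  ring

lemma J2 (x : ℂ) (l m : ℕ) : Bsum x l (m+1) = Bsum x l m + Ssum x l m := by
  rw [Bsum_eq_Asum, Bsum_eq_Asum, Ssum_comm]
  exact J1 x m l

lemma J4 (x : ℂ) (l m : ℕ) : Ssum x l (m+1) = Ssum x l m + x * Asum x l m := by
  have key : ∀ δ, x^(δ+1) * (l.choose (δ+1)) * ((m+1).choose (δ+1))
      = x^(δ+1) * (l.choose (δ+1)) * (m.choose (δ+1))
        + x * (x^δ * (l.choose (δ+1)) * (m.choose δ)) := by
    intro δ
    rw [Nat.choose_succ_succ m δ]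
    push_cast
    ring
  calc Ssum x l (m+1)
      = ∑ δ ∈ range (l+2), x^δ * (l.choose δ) * ((m+1).choose δ) :=
        Ssum_eq x l (m+1) (l+2) (by omega)
    _ = (∑ δ ∈ range (l+1), x^(δ+1) * (l.choose (δ+1)) * ((m+1).choose (δ+1)))
          + x^0 * (l.choose 0) * ((m+1).choose 0) :=
        Finset.sum_range_succ' _ (l+1)
    _ = ((∑ δ ∈ range (l+1), x^(δ+1) * (l.choose (δ+1)) * (m.choose (δ+1)))
          + x^0 * (l.choose 0) * (m.choose 0))
          + x * ∑ δ ∈ range (l+1), x^δ * (l.choose (δ+1)) * (m.choose δ) := by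
        rw [Finset.mul_sum]
        simp only [key]
        rw [Finset.sum_add_distrib]
        simp
        ring
    _ = Ssum x l m + x * Asum x l m := by
        rw [← Finset.sum_range_succ' (fun δ => x^δ * (l.choose δ) * (m.choose δ)) (l+1),
          ← Ssum_eq x l m (l+2) (by omega), Asum]

lemma J3 (x : ℂ) (l m : ℕ) : Ssum x (l+1) m = Ssum x l m + x * Bsum x l m := by
  rw [Ssum_comm, Ssum_comm x l m, Bsum_eq_Asum]
  exact J4 x m l

/-! ### Multiplication table -/

variable {a b c d : ℂ}

lemma tPP : !![a,b;0,0] * !![a,b;0,0] = a • !![a,b;0,0] := by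
  rw [Matrix.mul_fin_two]; simp [Matrix.smul_of]
lemma tPQ : !![a,b;0,0] * !![0,0;c,d] = b • !![c,d;0,0] := by
  rw [Matrix.mul_fin_two]; simp [Matrix.smul_of]
lemma tPR : !![a,b;0,0] * !![c,d;0,0] = a • !![c,d;0,0] := by
  rw [Matrix.mul_fin_two]; simp [Matrix.smul_of]
lemma tPS : !![a,b;0,0] * !![0,0;a,b] = b • !![a,b;0,0] := by
  rw [Matrix.mul_fin_two]; simp [Matrix.smul_of]
lemma tQP : !![0,0;c,d] * !![a,b;0,0] = c • !![0,0;a,b] := by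
  rw [Matrix.mul_fin_two]; simp [Matrix.smul_of]
lemma tQQ : !![0,0;c,d] * !![0,0;c,d] = d • !![0,0;c,d] := by
  rw [Matrix.mul_fin_two]; simp [Matrix.smul_of]
lemma tQR : !![0,0;c,d] * !![c,d;0,0] = c • !![0,0;c,d] := by
  rw [Matrix.mul_fin_two]; simp [Matrix.smul_of]
lemma tQS : !![0,0;c,d] * !![0,0;a,b] = d • !![0,0;a,b] := by
  rw [Matrix.mul_fin_two]; simp [Matrix.smul_of]

lemma tPpow : ∀ n, !![a,b;0,0] ^ (n+1) = a^n • !![a,b;0,0]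
  | 0 => by simp
  | (n+1) => by rw [pow_succ, tPpow n, Matrix.smul_mul, tPP, smul_smul, pow_succ]
lemma tQpow : ∀ n, !![0,0;c,d] ^ (n+1) = d^n • !![0,0;c,d]
  | 0 => by simp
  | (n+1) => by rw [pow_succ, tQpow n, Matrix.smul_mul, tQQ, smul_smul, pow_succ]

/-! ### The closed form -/

def Fmat (a b c d : ℂ) (l m : ℕ) : Matrix (Fin 2) (Fin 2) ℂ :=
  (a^l * d^m) • ( (b*c/a * Asum (b*c/(a*d)) l m) • !![a,b;0,0]
    + (b*c/d * Bsum (b*c/(a*d)) l m) • !![0,0;c,d]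
    + (b * Ssum (b*c/(a*d)) l m) • !![c,d;0,0]
    + (c * Ssum (b*c/(a*d)) l m) • !![0,0;a,b] )

lemma Fmat_zero_zero (ha : a ≠ 0) (hd : d ≠ 0) :
    Fmat a b c d 0 0 = b • !![c,d;0,0] + c • !![0,0;a,b] := by
  rw [Fmat, Asum_zero, Bsum_zero, Ssum_zero_r]
  match_scalars <;> field_simp <;> simp

lemma Fmat_rec (ha : a ≠ 0) (hd : d ≠ 0) (l m : ℕ) :
    Fmat a b c d (l+1) (m+1)
      = !![a,b;0,0] * Fmat a b c d l (m+1) + !![0,0;c,d] * Fmat a b c d (l+1) m := by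
  simp only [Fmat, Matrix.mul_smul, Matrix.mul_add, tPP, tPQ, tPR, tPS, tQP, tQQ, tQR, tQS,
    smul_smul, smul_add]
  match_scalars
  · rw [J1]; field_simp; ring
  · rw [J2]; field_simp; ring
  · rw [J3]; field_simp; ring
  · rw [J4]; field_simp; ring

lemma Fmat_row (ha : a ≠ 0) (hd : d ≠ 0) (l : ℕ) :
    Fmat a b c d (l+1) 0
      = !![a,b;0,0] * Fmat a b c d l 0 + (a^(l+1) * c) • !![0,0;a,b] := by
  simp only [Fmat, Matrix.mul_smul, Matrix.mul_add, tPP, tPQ, tPR, tPS, tQP, tQQ, tQR, tQS,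
    smul_smul, smul_add]
  match_scalars <;>
    simp only [J1, J2, J3, J4, Asum_zero, Bsum_zero, Ssum_zero_r, Ssum_zero_l] <;>
    field_simp <;> ring

lemma Fmat_col (ha : a ≠ 0) (hd : d ≠ 0) (m : ℕ) :
    Fmat a b c d 0 (m+1)
      = (d^(m+1) * b) • !![c,d;0,0] + !![0,0;c,d] * Fmat a b c d 0 m := by
  simp only [Fmat, Matrix.mul_smul, Matrix.mul_add, tPP, tPQ, tPR, tPS, tQP, tQQ, tQR, tQS,
    smul_smul, smul_add]
  match_scalars <;>
    simp only [J1, J2, J3, J4, Asum_zero, Bsum_zero, Ssum_zero_r, Ssum_zero_l] <;>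
    field_simp <;> ring

lemma key (ha : a ≠ 0) (hd : d ≠ 0) :
    ∀ m l : ℕ, Xi' !![a,b;0,0] !![0,0;c,d] (l+m+2) (m+1) = Fmat a b c d l m := by
  intro m
  induction m with
  | zero =>
    intro l
    induction l with
    | zero =>
      rw [show (0+0+2 : ℕ) = 1+1 from rfl, Xi'_succ_succ, Xi'_n_zero, Xi'_n_n,
        Fmat_zero_zero ha hd, pow_one, pow_one, tQP, tPQ]
      exact add_comm _ _
    | succ l ih =>
      rw [show l+1+0+2 = (l+0+2)+1 by omega, Xi'_succ_succ, Xi'_n_zero, ih,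
        tPpow (l+1), Matrix.mul_smul, tQP, smul_smul, Fmat_row ha hd]
      exact add_comm _ _
  | succ m ihm =>
    intro l
    induction l with
    | zero =>
      have h0 := ihm 0
      rw [show (0+m+2 : ℕ) = m+2 by omega] at h0
      rw [show 0+(m+1)+2 = (m+2)+1 by omega, Xi'_succ_succ, h0, Xi'_n_n,
        tQpow (m+1), Matrix.mul_smul, tPQ, smul_smul, Fmat_col ha hd]
      exact add_comm _ _
    | succ l ihl =>
      have h1 := ihm (l+1)
      rw [show (l+1)+m+2 = l+m+3 by omega] at h1
      rw [show l+(m+1)+2 = l+m+3 by omega] at ihl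
      rw [show (l+1)+(m+1)+2 = (l+m+3)+1 by omega, Xi'_succ_succ, h1, ihl,
        Fmat_rec ha hd]
      exact add_comm _ _

/-! ### Converting the `Icc` sums -/

lemma Icc_to_range (f : ℕ → ℂ) (K : ℕ) :
    ∑ γ ∈ Icc 1 K, f γ = ∑ δ ∈ range K, f (1+δ) := by
  rw [← Finset.Ico_add_one_right_eq_Icc, Finset.sum_Ico_eq_sum_range]
  simp

lemma KS (y : ℂ) (l m : ℕ) :
    ∑ γ ∈ Icc 1 (min (l+1) (m+1)),
      y^γ * (l.choose (γ-1) : ℂ) * (m.choose (γ-1) : ℂ) = y * Ssum y l m := by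
  rw [Icc_to_range, Nat.succ_min_succ]
  rw [← sum_ext_choose (fun δ => y^(1+δ) * (l.choose (1+δ-1) : ℂ) * (m.choose (1+δ-1) : ℂ))
    (K := min l m + 1) (N := l+1)
    (fun δ hδ => by
      simp only [Nat.add_sub_cancel_left]
      rcases Nat.lt_or_ge l m with h | h
      · rw [Nat.choose_eq_zero_of_lt (show l < δ by omega)]; simp
      · rw [Nat.choose_eq_zero_of_lt (show m < δ by omega)]; simp)
    (by omega)]
  rw [Ssum, Finset.mul_sum]
  refine Finset.sum_congr rfl fun δ _ => ?_
  simp only [Nat.add_sub_cancel_left]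
  ring

lemma KA (y : ℂ) (l m : ℕ) :
    ∑ γ ∈ Icc 1 (min (l+1) (m+1)),
      y^γ * (l.choose (γ-1) : ℂ) * (m.choose (γ-1) : ℂ) * (((l:ℂ)+1-γ)/γ)
      = y * Asum y l m := by
  rw [Icc_to_range, Nat.succ_min_succ]
  rw [← sum_ext_choose
    (fun δ => y^(1+δ) * (l.choose (1+δ-1) : ℂ) * (m.choose (1+δ-1) : ℂ)
      * (((l:ℂ)+1-(1+δ:ℕ))/(1+δ:ℕ)))
    (K := min l m + 1) (N := l+1)
    (fun δ hδ => by
      simp only [Nat.add_sub_cancel_left]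
      rcases Nat.lt_or_ge l m with h | h
      · rw [Nat.choose_eq_zero_of_lt (show l < δ by omega)]; simp
      · rw [Nat.choose_eq_zero_of_lt (show m < δ by omega)]; simp)
    (by omega)]
  rw [Asum, Finset.mul_sum]
  refine Finset.sum_congr rfl fun δ hδ => ?_
  have hδl : δ ≤ l := by simp at hδ; omega
  simp only [Nat.add_sub_cancel_left]
  have hC : (l.choose (δ+1) : ℂ) * ((δ:ℂ)+1) = (l.choose δ : ℂ) * ((l:ℂ)-δ) := by
    have h2 : ((l.choose (δ+1) * (δ+1) : ℕ) : ℂ) = ((l.choose δ * (l - δ) : ℕ) : ℂ) := by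
      exact_mod_cast congrArg (Nat.cast (R := ℂ)) (Nat.choose_succ_right_eq l δ)
    push_cast [Nat.cast_sub hδl] at h2
    exact h2
  have hne : ((1:ℂ)+(δ:ℂ)) ≠ 0 := by
    exact_mod_cast (Nat.cast_ne_zero (R := ℂ)).2 (show 1+δ ≠ 0 by omega)
  push_cast
  field_simp [hne]
  linear_combination (-(y^(1+δ) * (m.choose δ : ℂ))) * hC

lemma KB (y : ℂ) (l m : ℕ) :
    ∑ γ ∈ Icc 1 (min (l+1) (m+1)),
      y^γ * (l.choose (γ-1) : ℂ) * (m.choose (γ-1) : ℂ) * (((m:ℂ)+1-γ)/γ)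
      = y * Bsum y l m := by
  rw [Icc_to_range, Nat.succ_min_succ]
  rw [← sum_ext_choose
    (fun δ => y^(1+δ) * (l.choose (1+δ-1) : ℂ) * (m.choose (1+δ-1) : ℂ)
      * (((m:ℂ)+1-(1+δ:ℕ))/(1+δ:ℕ)))
    (K := min l m + 1) (N := m+1)
    (fun δ hδ => by
      simp only [Nat.add_sub_cancel_left]
      rcases Nat.lt_or_ge l m with h | h
      · rw [Nat.choose_eq_zero_of_lt (show l < δ by omega)]; simp
      · rw [Nat.choose_eq_zero_of_lt (show m < δ by omega)]; simp)
    (by omega)]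
  rw [Bsum, Finset.mul_sum]
  refine Finset.sum_congr rfl fun δ hδ => ?_
  have hδm : δ ≤ m := by simp at hδ; omega
  simp only [Nat.add_sub_cancel_left]
  have hC : (m.choose (δ+1) : ℂ) * ((δ:ℂ)+1) = (m.choose δ : ℂ) * ((m:ℂ)-δ) := by
    have h2 : ((m.choose (δ+1) * (δ+1) : ℕ) : ℂ) = ((m.choose δ * (m - δ) : ℕ) : ℂ) := by
      exact_mod_cast congrArg (Nat.cast (R := ℂ)) (Nat.choose_succ_right_eq m δ)
    push_cast [Nat.cast_sub hδm] at h2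
    exact h2
  have hne : ((1:ℂ)+(δ:ℂ)) ≠ 0 := by
    exact_mod_cast (Nat.cast_ne_zero (R := ℂ)).2 (show 1+δ ≠ 0 by omega)
  push_cast
  field_simp [hne]
  linear_combination (-(y^(1+δ) * (l.choose δ : ℂ))) * hC

/-- Lemma 1(i): for `min l m ≥ 1`,
`Ξ(l,m) = a^l (conj a)^m Δ^m ∑_{γ=1}^{l∧m} (-|b|²/|a|²)^γ C(l-1,γ-1) C(m-1,γ-1)
  [ (l-γ)/(aγ) P + (m-γ)/(Δ conj(a) γ) Q - 1/(Δ conj b) R + 1/b S ]`. -/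
theorem xi_formula (a b c d : ℂ)
    (hU : !![a, b; c, d] ∈ Matrix.unitaryGroup (Fin 2) ℂ)
    (habcd : a * b * c * d ≠ 0)
    (l m : ℕ) (hl : 1 ≤ l) (hm : 1 ≤ m) :
    Xi !![a, b; 0, 0] !![0, 0; c, d] l m =
      (a ^ l * (starRingEnd ℂ) a ^ m * (a * d - b * c) ^ m) •
        ∑ γ ∈ Finset.Icc 1 (min l m),
          ((-(((‖b‖ : ℝ) : ℂ) ^ 2 / ((‖a‖ : ℝ) : ℂ) ^ 2)) ^ γ *
              ((l - 1).choose (γ - 1) : ℂ) * ((m - 1).choose (γ - 1) : ℂ)) •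
            ((((l : ℂ) - (γ : ℂ)) / (a * (γ : ℂ))) • !![a, b; 0, 0] +
              (((m : ℂ) - (γ : ℂ)) / ((a * d - b * c) * (starRingEnd ℂ) a * (γ : ℂ))) •
                !![0, 0; c, d] -
              (1 / ((a * d - b * c) * (starRingEnd ℂ) b)) • !![c, d; 0, 0] +
              (1 / b) • !![0, 0; a, b]) := by
  obtain ⟨l', rfl⟩ : ∃ l', l = l'+1 := ⟨l-1, by omega⟩
  obtain ⟨m', rfl⟩ : ∃ m', m = m'+1 := ⟨m-1, by omega⟩
  have ha : a ≠ 0 := by rintro rfl; simp at habcd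
  have hb : b ≠ 0 := by rintro rfl; simp at habcd
  have hc0 : c ≠ 0 := by rintro rfl; simp at habcd
  have hd0 : d ≠ 0 := by rintro rfl; simp at habcd
  have hca : (starRingEnd ℂ) a ≠ 0 := by
    rw [starRingEnd_apply]; exact star_ne_zero.2 ha
  have hcb : (starRingEnd ℂ) b ≠ 0 := by
    rw [starRingEnd_apply]; exact star_ne_zero.2 hb
  have hUU : !![a,b;c,d] * star !![a,b;c,d] = 1 := (Matrix.mem_unitaryGroup_iff).1 hU
  have hstar : star !![a,b;c,d]
      = !![(starRingEnd ℂ) a, (starRingEnd ℂ) c; (starRingEnd ℂ) b, (starRingEnd ℂ) d] := by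
    rw [Matrix.star_eq_conjTranspose]
    ext i j
    fin_cases i <;> fin_cases j <;> simp [Matrix.conjTranspose_apply]
  rw [hstar, Matrix.mul_fin_two, Matrix.one_fin_two] at hUU
  have h1 : a * (starRingEnd ℂ) a + b * (starRingEnd ℂ) b = 1 := by
    simpa using congrFun (congrFun hUU 0) 0
  have h2 : c * (starRingEnd ℂ) a + d * (starRingEnd ℂ) b = 0 := by
    simpa using congrFun (congrFun hUU 1) 0
  obtain ⟨e, hedef⟩ : ∃ e, a*d - b*c = e := ⟨_, rfl⟩
  have hd2 : d = e * (starRingEnd ℂ) a := by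
    rw [← hedef]; linear_combination b*h2 - d*h1
  have hc2 : c = -(e * (starRingEnd ℂ) b) := by
    rw [← hedef]; linear_combination a*h2 - c*h1
  have he : e ≠ 0 := fun h => hd0 (by rw [hd2, h, zero_mul])
  have hb2 : (((‖b‖ : ℝ) : ℂ))^2 = b * (starRingEnd ℂ) b := by
    rw [Complex.mul_conj, ← Complex.sq_norm]
    push_cast
    ring
  have ha2 : (((‖a‖ : ℝ) : ℂ))^2 = a * (starRingEnd ℂ) a := by
    rw [Complex.mul_conj, ← Complex.sq_norm]
    push_cast
    ring
  have hXi : Xi !![a,b;0,0] !![0,0;c,d] (l'+1) (m'+1)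
      = Xi' !![a,b;0,0] !![0,0;c,d] (l'+m'+2) (m'+1) := by
    rw [show l'+m'+2 = (l'+1)+(m'+1) by omega]; rfl
  rw [hXi, key ha hd0 m' l']
  rw [hedef, hb2, ha2, hc2, hd2]
  simp only [Nat.add_sub_cancel]
  rw [Finset.smul_sum]
  simp only [smul_smul, smul_add, smul_sub]
  rw [Finset.sum_add_distrib, Finset.sum_sub_distrib, Finset.sum_add_distrib,
    ← Finset.sum_smul, ← Finset.sum_smul, ← Finset.sum_smul, ← Finset.sum_smul]
  have hx : b * -(e * (starRingEnd ℂ) b) / (a * (e * (starRingEnd ℂ) a))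
      = -(b * (starRingEnd ℂ) b / (a * (starRingEnd ℂ) a)) := by
    field_simp
  have eP : ∀ γ ∈ Finset.Icc 1 (min (l'+1) (m'+1)),
      a ^ (l' + 1) * (starRingEnd ℂ) a ^ (m' + 1) * e ^ (m' + 1) *
        ((-(b * (starRingEnd ℂ) b / (a * (starRingEnd ℂ) a))) ^ γ * (l'.choose (γ - 1) : ℂ) *
          (m'.choose (γ - 1) : ℂ) * ((((l':ℕ)+1 : ℕ) - (γ:ℂ)) / (a * (γ:ℂ))))
      = (a ^ (l' + 1) * (starRingEnd ℂ) a ^ (m' + 1) * e ^ (m' + 1) / a) *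
        ((-(b * (starRingEnd ℂ) b / (a * (starRingEnd ℂ) a))) ^ γ * (l'.choose (γ - 1) : ℂ) *
          (m'.choose (γ - 1) : ℂ) * (((l':ℂ)+1-(γ:ℂ))/(γ:ℂ))) := by
    intro γ _
    push_cast
    ring
  have eQ : ∀ γ ∈ Finset.Icc 1 (min (l'+1) (m'+1)),
      a ^ (l' + 1) * (starRingEnd ℂ) a ^ (m' + 1) * e ^ (m' + 1) *
        ((-(b * (starRingEnd ℂ) b / (a * (starRingEnd ℂ) a))) ^ γ * (l'.choose (γ - 1) : ℂ) *
          (m'.choose (γ - 1) : ℂ) * ((((m':ℕ)+1 : ℕ) - (γ:ℂ)) / (e * (starRingEnd ℂ) a * (γ:ℂ))))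
      = (a ^ (l' + 1) * (starRingEnd ℂ) a ^ (m' + 1) * e ^ (m' + 1) / (e * (starRingEnd ℂ) a)) *
        ((-(b * (starRingEnd ℂ) b / (a * (starRingEnd ℂ) a))) ^ γ * (l'.choose (γ - 1) : ℂ) *
          (m'.choose (γ - 1) : ℂ) * (((m':ℂ)+1-(γ:ℂ))/(γ:ℂ))) := by
    intro γ _
    push_cast
    ring
  have eR : ∀ γ ∈ Finset.Icc 1 (min (l'+1) (m'+1)),
      a ^ (l' + 1) * (starRingEnd ℂ) a ^ (m' + 1) * e ^ (m' + 1) *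
        ((-(b * (starRingEnd ℂ) b / (a * (starRingEnd ℂ) a))) ^ γ * (l'.choose (γ - 1) : ℂ) *
          (m'.choose (γ - 1) : ℂ) * (1 / (e * (starRingEnd ℂ) b)))
      = (a ^ (l' + 1) * (starRingEnd ℂ) a ^ (m' + 1) * e ^ (m' + 1) / (e * (starRingEnd ℂ) b)) *
        ((-(b * (starRingEnd ℂ) b / (a * (starRingEnd ℂ) a))) ^ γ * (l'.choose (γ - 1) : ℂ) *
          (m'.choose (γ - 1) : ℂ)) := by
    intro γ _
    ring
  have eS : ∀ γ ∈ Finset.Icc 1 (min (l'+1) (m'+1)),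
      a ^ (l' + 1) * (starRingEnd ℂ) a ^ (m' + 1) * e ^ (m' + 1) *
        ((-(b * (starRingEnd ℂ) b / (a * (starRingEnd ℂ) a))) ^ γ * (l'.choose (γ - 1) : ℂ) *
          (m'.choose (γ - 1) : ℂ) * (1 / b))
      = (a ^ (l' + 1) * (starRingEnd ℂ) a ^ (m' + 1) * e ^ (m' + 1) / b) *
        ((-(b * (starRingEnd ℂ) b / (a * (starRingEnd ℂ) a))) ^ γ * (l'.choose (γ - 1) : ℂ) *
          (m'.choose (γ - 1) : ℂ)) := by
    intro γ _
    ring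
  rw [Finset.sum_congr rfl eP, Finset.sum_congr rfl eQ, Finset.sum_congr rfl eR,
    Finset.sum_congr rfl eS]
  rw [← Finset.mul_sum, ← Finset.mul_sum, ← Finset.mul_sum, ← Finset.mul_sum]
  rw [KA]
  rw [KB]
  rw [KS]
  simp only [Fmat]
  rw [hx]
  match_scalars <;> field_simp <;> ring

end
end

section
/- For every even positive integer m, every n ≥ 1, and any two unit vectors φ, φ' ∈ ℂ², the mth moments agree: E((X_n^φ)^m) = E((X_n^{φ'})^m); i.e., the even moments of the quantum random walk are independent of the initial qubit state. -/
open Matrix Finset Filter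
open scoped Classical Topology

noncomputable section

/-- `prob P Q φ n k = P(X_n^φ = k) = ‖Ξ((n-k)/2, (n+k)/2) φ‖²` when `|k| ≤ n` and
`n + k` is even, and `0` otherwise. -/
def prob (P Q : Matrix (Fin 2) (Fin 2) ℂ) (φ : Fin 2 → ℂ) (n : ℕ) (k : ℤ) : ℝ :=
  if Even ((n : ℤ) + k) ∧ k.natAbs ≤ n then
    ∑ i, ‖(Xi P Q (((n : ℤ) - k).toNat / 2) (((n : ℤ) + k).toNat / 2)).mulVec φ i‖ ^ 2
  else 0

/-- `moment P Q φ n m = E((X_n^φ)^m) = ∑_{k=-n}^{n} k^m P(X_n^φ = k)`. -/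
def moment (P Q : Matrix (Fin 2) (Fin 2) ℂ) (φ : Fin 2 → ℂ) (n : ℕ) (m : ℕ) : ℝ :=
  ∑ k ∈ Finset.Icc (-(n : ℤ)) (n : ℤ), (k : ℝ) ^ m * prob P Q φ n k

/-! ### Auxiliary machinery -/

private def Km : Matrix (Fin 2) (Fin 2) ℂ := !![0, 1; -1, 0]

private lemma Km_mul_KmH : Km * Kmᴴ = 1 := by
  ext i j; fin_cases i <;> fin_cases j <;>
    simp [Km, Matrix.mul_apply, Fin.sum_univ_two, Matrix.one_apply, conjTranspose_apply]

private lemma KmH_mul_Km : Kmᴴ * Km = 1 := by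
  ext i j; fin_cases i <;> fin_cases j <;>
    simp [Km, Matrix.mul_apply, Fin.sum_univ_two, Matrix.one_apply, conjTranspose_apply]

private lemma KmH_cancel (Z : Matrix (Fin 2) (Fin 2) ℂ) : Kmᴴ * (Km * Z) = Z := by
  rw [← Matrix.mul_assoc, KmH_mul_Km, Matrix.one_mul]

private lemma conj_split (X Y : Matrix (Fin 2) (Fin 2) ℂ) :
    Km * (X * Y) * Kmᴴ = (Km * X * Kmᴴ) * (Km * Y * Kmᴴ) := by
  simp only [Matrix.mul_assoc, KmH_cancel]

private lemma word_conj (P Q : Matrix (Fin 2) (Fin 2) ℂ) (δ : ℂ)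
    (hP : Km * P.map (starRingEnd ℂ) * Kmᴴ = δ • Q)
    (hQ : Km * Q.map (starRingEnd ℂ) * Kmᴴ = δ • P) :
    ∀ L : List Bool,
      Km * ((L.map fun s : Bool => if s then Q else P).prod).map (starRingEnd ℂ) * Kmᴴ
        = δ ^ L.length • (L.map fun s : Bool => if s then P else Q).prod := by
  intro L
  induction L with
  | nil =>
      simp [Matrix.map_one (starRingEnd ℂ) (map_zero _) (map_one _), Km_mul_KmH]
  | cons s L ih =>
      have hif : Km * ((if s then Q else P).map (starRingEnd ℂ)) * Kmᴴ
          = δ • (if s then P else Q) := by cases s <;> simp [hP, hQ]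
      simp only [List.map_cons, List.prod_cons, List.length_cons, Matrix.map_mul]
      rw [conj_split, hif, ih, Matrix.smul_mul, Matrix.mul_smul, smul_smul, mul_comm,
        ← pow_succ]

private def Sw (P Q : Matrix (Fin 2) (Fin 2) ℂ) (n m : ℕ) : Matrix (Fin 2) (Fin 2) ℂ :=
  ∑ w ∈ Finset.univ.filter
      (fun w : Fin n → Bool => (Finset.univ.filter fun i => w i = true).card = m),
    (List.ofFn fun i => if w i then Q else P).prod

private lemma Xi_eq_Sw (P Q : Matrix (Fin 2) (Fin 2) ℂ) (l m : ℕ) :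
    Xi P Q l m = Sw P Q (l + m) m := rfl

private lemma card_not (n m : ℕ) (w : Fin n → Bool)
    (hw : (Finset.univ.filter fun i => w i = true).card = m) (hm : m ≤ n) :
    (Finset.univ.filter fun i => (!w i) = true).card = n - m := by
  have h1 : (Finset.univ.filter fun i => (!w i) = true)
      = (Finset.univ.filter fun i => ¬ (w i = true)) := by ext x; simp
  have h2 := Finset.card_filter_add_card_filter_not (s := (Finset.univ : Finset (Fin n)))
      (p := fun i => w i = true)
  simp only [Finset.card_univ, Fintype.card_fin] at h2
  rw [h1]; omega

private lemma Sw_conj (P Q : Matrix (Fin 2) (Fin 2) ℂ) (δ : ℂ)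
    (hP : Km * P.map (starRingEnd ℂ) * Kmᴴ = δ • Q)
    (hQ : Km * Q.map (starRingEnd ℂ) * Kmᴴ = δ • P)
    (n m : ℕ) (hm : m ≤ n) :
    Km * (Sw P Q n m).map (starRingEnd ℂ) * Kmᴴ = δ ^ n • Sw P Q n (n - m) := by
  unfold Sw
  have hmap : ((∑ w ∈ Finset.univ.filter
      (fun w : Fin n → Bool => (Finset.univ.filter fun i => w i = true).card = m),
      (List.ofFn fun i => if w i then Q else P).prod).map (starRingEnd ℂ))
      = ∑ w ∈ Finset.univ.filter
      (fun w : Fin n → Bool => (Finset.univ.filter fun i => w i = true).card = m),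
      ((List.ofFn fun i => if w i then Q else P).prod).map (starRingEnd ℂ) := by
    ext i j
    simp [Matrix.map_apply, Matrix.sum_apply]
  rw [hmap, Finset.mul_sum, Finset.sum_mul, Finset.smul_sum]
  refine Finset.sum_nbij' (i := fun w x => !(w x)) (j := fun w x => !(w x)) ?_ ?_ ?_ ?_ ?_
  · intro w hw
    simp only [Finset.mem_filter, Finset.mem_univ, true_and] at hw ⊢
    exact card_not n m w hw hm
  · intro w hw
    simp only [Finset.mem_filter, Finset.mem_univ, true_and] at hw ⊢
    have := card_not n (n - m) w hw (Nat.sub_le n m)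
    have hle := (Finset.card_filter_le Finset.univ (fun i : Fin n => w i = true)).trans_eq
      (by simp : (Finset.univ : Finset (Fin n)).card = n)
    omega
  · intro w _; funext x; simp
  · intro w _; funext x; simp
  · intro w _
    have hlist : (List.ofFn fun i => if w i then Q else P)
        = (List.ofFn w).map (fun s : Bool => if s then Q else P) := by
      rw [List.map_ofFn]; rfl
    have hlist2 : (List.ofFn fun i => if (!(w i)) then Q else P)
        = (List.ofFn w).map (fun s : Bool => if s then P else Q) := by
      rw [List.map_ofFn]
      congr 1
      funext i
      cases h : w i <;> simp [Function.comp, h]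
    rw [hlist]
    rw [word_conj P Q δ hP hQ (List.ofFn w)]
    simp only [List.length_ofFn]
    congr 1
    rw [hlist2]

private lemma herm_comp (X : Matrix (Fin 2) (Fin 2) ℂ) (hX : Xᴴ = X) :
    X + Km * X.map (starRingEnd ℂ) * Kmᴴ = X.trace • 1 := by
  have h00 : (starRingEnd ℂ) (X 0 0) = X 0 0 := congrFun (congrFun hX 0) 0
  have h11 : (starRingEnd ℂ) (X 1 1) = X 1 1 := congrFun (congrFun hX 1) 1
  have h01 : (starRingEnd ℂ) (X 0 1) = X 1 0 := congrFun (congrFun hX 1) 0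
  have h10 : (starRingEnd ℂ) (X 1 0) = X 0 1 := congrFun (congrFun hX 0) 1
  ext i j
  fin_cases i <;> fin_cases j <;>
    · simp only [Km, Matrix.add_apply, Matrix.mul_apply, Matrix.map_apply,
        Matrix.conjTranspose_apply, Fin.sum_univ_two, Matrix.one_apply, Matrix.smul_apply,
        Matrix.trace_fin_two, Matrix.of_apply, Matrix.cons_val', Matrix.cons_val_zero,
        Matrix.cons_val_one, Matrix.head_cons, Matrix.head_fin_const, Matrix.empty_val',
        Matrix.cons_val_fin_one, smul_eq_mul, Fin.zero_eta, Fin.mk_one, h00, h11, h01, h10,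
        RingHom.map_neg, RingHom.map_zero, RingHom.map_one, star_zero, star_one, star_neg]
      norm_num
      try ring_nf
      try simp [h00, h11, h01, h10]
      try ring

private lemma sum_sq_eq (G H : Matrix (Fin 2) (Fin 2) ℂ) (t : ℂ)
    (h : Gᴴ * G + Hᴴ * H = t • 1) (φ : Fin 2 → ℂ) (hφ : ∑ i, ‖φ i‖ ^ 2 = 1) :
    (∑ i, ‖G.mulVec φ i‖ ^ 2) + (∑ i, ‖H.mulVec φ i‖ ^ 2) = t.re := by
  have key : ∀ z : ℂ, ‖z‖ ^ 2 = (z * (starRingEnd ℂ) z).re := by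
    intro z; rw [Complex.mul_conj]; simp [Complex.sq_norm]
  have e : ∀ i j : Fin 2, (Gᴴ * G + Hᴴ * H) i j = (t • (1 : Matrix (Fin 2) (Fin 2) ℂ)) i j :=
    fun i j => by rw [h]
  have e00 := e 0 0; have e01 := e 0 1; have e10 := e 1 0; have e11 := e 1 1
  simp only [Matrix.add_apply, Matrix.mul_apply, Matrix.conjTranspose_apply, Fin.sum_univ_two,
    Matrix.smul_apply, Matrix.one_apply, smul_eq_mul, RCLike.star_def,
    if_true, if_false, Fin.zero_eta, Fin.mk_one, ne_eq, one_ne_zero, not_false_eq_true,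
    mul_one, mul_zero] at e00 e01 e10 e11
  norm_num at e01 e10
  have hS : (φ 0 * (starRingEnd ℂ) (φ 0) + φ 1 * (starRingEnd ℂ) (φ 1)).im = 0 := by
    simp [Complex.add_im, Complex.mul_conj]
  have hSre : (φ 0 * (starRingEnd ℂ) (φ 0) + φ 1 * (starRingEnd ℂ) (φ 1)).re = 1 := by
    rw [← hφ]; simp [Fin.sum_univ_two, key, Complex.add_re]
  have main : G.mulVec φ 0 * (starRingEnd ℂ) (G.mulVec φ 0)
      + G.mulVec φ 1 * (starRingEnd ℂ) (G.mulVec φ 1)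
      + (H.mulVec φ 0 * (starRingEnd ℂ) (H.mulVec φ 0)
      + H.mulVec φ 1 * (starRingEnd ℂ) (H.mulVec φ 1))
      = t * (φ 0 * (starRingEnd ℂ) (φ 0) + φ 1 * (starRingEnd ℂ) (φ 1)) := by
    simp only [Matrix.mulVec, dotProduct, Fin.sum_univ_two, _root_.map_add,
      _root_.map_mul]
    linear_combination (φ 0 * (starRingEnd ℂ) (φ 0)) * e00
      + (φ 1 * (starRingEnd ℂ) (φ 0)) * e01
      + (φ 0 * (starRingEnd ℂ) (φ 1)) * e10
      + (φ 1 * (starRingEnd ℂ) (φ 1)) * e11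
  have hre := congrArg Complex.re main
  rw [Complex.mul_re, hS, hSre] at hre
  simp only [Complex.add_re] at hre
  simp only [Fin.sum_univ_two, key]
  linarith [hre]

/-- The even moments of the quantum random walk are independent of the initial qubit
state: for even `m > 0` and any two unit vectors `φ, φ'`,
`E((X_n^φ)^m) = E((X_n^{φ'})^m)`. -/
theorem even_moment_independent (a b c d : ℂ)
    (hU : !![a, b; c, d] ∈ Matrix.unitaryGroup (Fin 2) ℂ)
    (habcd : a * b * c * d ≠ 0)
    (n : ℕ) (hn : 1 ≤ n) (m : ℕ) (hm : Even m) (hm0 : 0 < m)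
    (φ φ' : Fin 2 → ℂ)
    (hφ : ∑ i, ‖φ i‖ ^ 2 = 1) (hφ' : ∑ i, ‖φ' i‖ ^ 2 = 1) :
    moment !![a, b; 0, 0] !![0, 0; c, d] φ n m =
      moment !![a, b; 0, 0] !![0, 0; c, d] φ' n m := by
  set Pm : Matrix (Fin 2) (Fin 2) ℂ := !![a, b; 0, 0] with hPm
  set Qm : Matrix (Fin 2) (Fin 2) ℂ := !![0, 0; c, d] with hQm
  -- unitarity relations
  have hU' : (!![a, b; c, d])ᴴ * !![a, b; c, d] = 1 := Matrix.mem_unitaryGroup_iff'.mp hU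
  have e : ∀ i j : Fin 2, ((!![a, b; c, d])ᴴ * !![a, b; c, d]) i j
      = (1 : Matrix (Fin 2) (Fin 2) ℂ) i j := fun i j => by rw [hU']
  have c1 := e 0 0; have c2 := e 0 1; have c3 := e 1 0; have c4 := e 1 1
  simp only [Matrix.mul_apply, Matrix.conjTranspose_apply, Fin.sum_univ_two, Matrix.one_apply,
    Matrix.of_apply, Matrix.cons_val', Matrix.cons_val_zero, Matrix.cons_val_one,
    Matrix.head_cons, Matrix.empty_val', Matrix.cons_val_fin_one, Matrix.head_fin_const,
    RCLike.star_def, Fin.zero_eta, Fin.mk_one] at c1 c2 c3 c4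
  norm_num at c1 c2 c3 c4
  have hdet : (a * d - b * c) * (starRingEnd ℂ) (a * d - b * c) = 1 := by
    have h2 : !![a, b; c, d] * (!![a, b; c, d])ᴴ = 1 := Matrix.mem_unitaryGroup_iff.mp hU
    have h3 := congrArg Matrix.det h2
    rw [Matrix.det_mul, Matrix.det_conjTranspose, Matrix.det_one] at h3
    simpa [Matrix.det_fin_two_of, RCLike.star_def] using h3
  set δc := (starRingEnd ℂ) (a * d - b * c) with hδc
  -- the conjugation relations
  have hKP : Km * Pm.map (starRingEnd ℂ) * Kmᴴ = δc • Qm := by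
    ext i j
    fin_cases i <;> fin_cases j <;>
      simp only [Km, hδc, hPm, hQm, Matrix.mul_apply, Matrix.map_apply,
        Matrix.conjTranspose_apply, Fin.sum_univ_two, Matrix.smul_apply, Matrix.of_apply,
        Matrix.cons_val', Matrix.cons_val_zero, Matrix.cons_val_one, Matrix.head_cons,
        Matrix.empty_val', Matrix.cons_val_fin_one, Matrix.head_fin_const, Fin.zero_eta,
        Fin.mk_one, smul_eq_mul, map_sub, _root_.map_mul, map_zero, star_zero, star_one,
        star_neg, RCLike.star_def]
    · norm_num
    · norm_num
    · norm_num
      linear_combination (norm := ring_nf) (starRingEnd ℂ b) * c1 - (starRingEnd ℂ a) * c3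
    · norm_num
      linear_combination (norm := ring_nf) (starRingEnd ℂ b) * c2 - (starRingEnd ℂ a) * c4
  have hKQ : Km * Qm.map (starRingEnd ℂ) * Kmᴴ = δc • Pm := by
    ext i j
    fin_cases i <;> fin_cases j <;>
      simp only [Km, hδc, hPm, hQm, Matrix.mul_apply, Matrix.map_apply,
        Matrix.conjTranspose_apply, Fin.sum_univ_two, Matrix.smul_apply, Matrix.of_apply,
        Matrix.cons_val', Matrix.cons_val_zero, Matrix.cons_val_one, Matrix.head_cons,
        Matrix.empty_val', Matrix.cons_val_fin_one, Matrix.head_fin_const, Fin.zero_eta,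
        Fin.mk_one, smul_eq_mul, map_sub, _root_.map_mul, map_zero, star_zero, star_one,
        star_neg, RCLike.star_def]
    · norm_num
      linear_combination (norm := ring_nf) (starRingEnd ℂ c) * c3 - (starRingEnd ℂ d) * c1
    · norm_num
      linear_combination (norm := ring_nf) (starRingEnd ℂ c) * c4 - (starRingEnd ℂ d) * c2
    · norm_num
    · norm_num
  -- key: the paired probabilities are state-independent
  have key : ∀ (ψ : Fin 2 → ℂ), (∑ i, ‖ψ i‖ ^ 2 = 1) → ∀ k : ℤ,
      prob Pm Qm ψ n k + prob Pm Qm ψ n (-k)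
        = if Even ((n : ℤ) + k) ∧ k.natAbs ≤ n then
            (((Sw Pm Qm n (((n : ℤ) + k).toNat / 2))ᴴ *
              Sw Pm Qm n (((n : ℤ) + k).toNat / 2)).trace).re
          else 0 := by
    intro ψ hψ k
    have hiff : (Even ((n : ℤ) + -k) ∧ (-k).natAbs ≤ n) ↔
        (Even ((n : ℤ) + k) ∧ k.natAbs ≤ n) := by
      rw [Int.natAbs_neg]
      constructor <;> rintro ⟨h1, h2⟩ <;>
        exact ⟨by rw [Int.even_iff] at h1 ⊢; omega, h2⟩
    by_cases hcond : Even ((n : ℤ) + k) ∧ k.natAbs ≤ n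
    · obtain ⟨hk, habsk⟩ := hcond
      have hk2 : ((n : ℤ) + k) % 2 = 0 := Int.even_iff.mp hk
      set m2 : ℕ := ((n : ℤ) + k).toNat / 2 with hm2
      set l2 : ℕ := ((n : ℤ) - k).toNat / 2 with hl2
      have hlm : l2 + m2 = n := by omega
      have hm2n : m2 ≤ n := by omega
      have hl2n : l2 = n - m2 := by omega
      have hneg1 : ((n : ℤ) - -k).toNat / 2 = m2 := by omega
      have hneg2 : ((n : ℤ) + -k).toNat / 2 = l2 := by omega
      set G : Matrix (Fin 2) (Fin 2) ℂ := Sw Pm Qm n m2 with hG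
      set H : Matrix (Fin 2) (Fin 2) ℂ := Sw Pm Qm n (n - m2) with hH
      have hXi1 : Xi Pm Qm l2 m2 = G := by rw [Xi_eq_Sw, hlm]
      have hXi2 : Xi Pm Qm m2 l2 = H := by
        rw [Xi_eq_Sw, Nat.add_comm m2 l2, hlm, hl2n]
      -- the conjugation swap
      have E := Sw_conj Pm Qm δc hKP hKQ n m2 hm2n
      rw [← hG, ← hH] at E
      have hHe : H = (a * d - b * c) ^ n • (Km * G.map (starRingEnd ℂ) * Kmᴴ) := by
        rw [E, smul_smul, ← mul_pow, hdet, one_pow, one_smul]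
      have hswap : Hᴴ * H = Km * ((Gᴴ * G).map (starRingEnd ℂ)) * Kmᴴ := by
        have hmapH : (G.map (starRingEnd ℂ))ᴴ = Gᴴ.map (starRingEnd ℂ) := by
          ext i j
          simp [Matrix.conjTranspose_apply, Matrix.map_apply, RCLike.star_def]
        rw [hHe, Matrix.conjTranspose_smul, Matrix.smul_mul, Matrix.mul_smul, smul_smul]
        have hsc : star ((a * d - b * c) ^ n) * (a * d - b * c) ^ n = 1 := by
          rw [star_pow, ← mul_pow]
          rw [show star (a * d - b * c) * (a * d - b * c)
            = (a * d - b * c) * (starRingEnd ℂ) (a * d - b * c) from by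
              rw [RCLike.star_def, mul_comm], hdet, one_pow]
        rw [hsc, one_smul]
        rw [Matrix.conjTranspose_mul, Matrix.conjTranspose_mul,
          Matrix.conjTranspose_conjTranspose, hmapH]
        calc Km * (Gᴴ.map (starRingEnd ℂ) * Kmᴴ) * (Km * G.map (starRingEnd ℂ) * Kmᴴ)
            = Km * (Gᴴ.map (starRingEnd ℂ) * (Kmᴴ * (Km * (G.map (starRingEnd ℂ) * Kmᴴ)))) := by
              simp only [Matrix.mul_assoc]
          _ = Km * (Gᴴ.map (starRingEnd ℂ) * (G.map (starRingEnd ℂ) * Kmᴴ)) := by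
              rw [KmH_cancel]
          _ = Km * ((Gᴴ * G).map (starRingEnd ℂ)) * Kmᴴ := by
              rw [Matrix.map_mul]
              simp only [Matrix.mul_assoc]
      have hherm : (Gᴴ * G)ᴴ = Gᴴ * G := by
        rw [Matrix.conjTranspose_mul, Matrix.conjTranspose_conjTranspose]
      have hGH : Gᴴ * G + Hᴴ * H = (Gᴴ * G).trace • 1 := by
        rw [hswap]; exact herm_comp (Gᴴ * G) hherm
      rw [prob, prob, if_pos ⟨hk, habsk⟩, if_pos (hiff.mpr ⟨hk, habsk⟩),
        if_pos ⟨hk, habsk⟩]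
      rw [← hm2, ← hl2, hneg1, hneg2, hXi1, hXi2]
      exact sum_sq_eq G H _ hGH ψ hψ
    · rw [prob, prob, if_neg hcond, if_neg (fun hc => hcond (hiff.mp hc)), if_neg hcond]
      norm_num
  -- reindexing the moment sum by `k ↦ -k`
  have hmomdef : ∀ ψ : Fin 2 → ℂ, moment Pm Qm ψ n m
      = ∑ k ∈ Finset.Icc (-(n : ℤ)) (n : ℤ), (k : ℝ) ^ m * prob Pm Qm ψ n k :=
    fun ψ => rfl
  have hsum : ∀ ψ : Fin 2 → ℂ,
      (∑ k ∈ Finset.Icc (-(n : ℤ)) (n : ℤ), (k : ℝ) ^ m * prob Pm Qm ψ n k)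
      = ∑ k ∈ Finset.Icc (-(n : ℤ)) (n : ℤ), (k : ℝ) ^ m * prob Pm Qm ψ n (-k) := by
    intro ψ
    refine Finset.sum_nbij' (i := fun k : ℤ => -k) (j := fun k : ℤ => -k) ?_ ?_ ?_ ?_ ?_
    · intro k hk; simp only [Finset.mem_Icc] at hk ⊢; omega
    · intro k hk; simp only [Finset.mem_Icc] at hk ⊢; omega
    · intro k _; ring
    · intro k _; ring
    · intro k _
      rw [neg_neg, Int.cast_neg, hm.neg_pow]
  have h2 : moment Pm Qm φ n m + moment Pm Qm φ n m
      = moment Pm Qm φ' n m + moment Pm Qm φ' n m := by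
    have hx : ∀ ψ : Fin 2 → ℂ, (∑ i, ‖ψ i‖ ^ 2 = 1) →
        moment Pm Qm ψ n m + moment Pm Qm ψ n m
          = ∑ k ∈ Finset.Icc (-(n : ℤ)) (n : ℤ), (k : ℝ) ^ m *
              (if Even ((n : ℤ) + k) ∧ k.natAbs ≤ n then
                (((Sw Pm Qm n (((n : ℤ) + k).toNat / 2))ᴴ *
                  Sw Pm Qm n (((n : ℤ) + k).toNat / 2)).trace).re
              else 0) := by
      intro ψ hψ
      rw [hmomdef ψ]
      nth_rewrite 2 [hsum ψ]
      rw [← Finset.sum_add_distrib]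
      refine Finset.sum_congr rfl fun k _ => ?_
      rw [← mul_add, key ψ hψ k]
    rw [hx φ hφ, hx φ' hφ']
  linarith [h2]

end
end

section
/- For any unit vector φ = (α,β) ∈ ℂ², the function f(·; φ) is a probability density: ∫_{−|a|}^{|a|} (√(1−|a|²) / (π(1−x²)√(|a|²−x²))) · { 1 − ( |α|² − |β|² + (aα·conj(bβ) + conj(aα)·bβ)/|a|² ) · x } dx = 1. -/
open MeasureTheory intervalIntegral Set Filter Real

noncomputable def Adens (r : ℝ) : ℝ → ℝ :=
  fun x => Real.sqrt (1 - r^2) / (Real.pi * (1 - x^2) * Real.sqrt (r^2 - x^2))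

lemma Adens_meas (r : ℝ) : Measurable (Adens r) := by
  unfold Adens; fun_prop

lemma Adens_even (r x : ℝ) : Adens r (-x) = Adens r x := by simp [Adens]

lemma Adens_intOn_right (r : ℝ) (hr0 : 0 < r) (hr1 : r < 1) :
    IntegrableOn (Adens r) (Ioo 0 r) := by
  set M : ℝ := Real.sqrt (1-r^2) / (Real.pi * (1-r^2) * Real.sqrt r) with hM
  have hmaj : IntegrableOn (fun x => M * (r - x) ^ (-(1:ℝ)/2)) (Ioo 0 r) := by
    have h1 : IntervalIntegrable (fun x : ℝ => x ^ (-(1:ℝ)/2)) volume 0 r :=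
      intervalIntegrable_rpow' (by norm_num)
    have h2 := (h1.comp_sub_left r).symm
    simp only [sub_zero, sub_self] at h2
    exact ((intervalIntegrable_iff_integrableOn_Ioo_of_le hr0.le).mp h2).const_mul M
  refine Integrable.mono hmaj ((Adens_meas r).aestronglyMeasurable.restrict) ?_
  rw [ae_restrict_iff' measurableSet_Ioo]
  filter_upwards with x hx
  obtain ⟨hx0, hxr⟩ := hx
  have h1x : 1 - r^2 ≤ 1 - x^2 := by nlinarith
  have hk : 0 < Real.sqrt (1-r^2) := Real.sqrt_pos.mpr (by nlinarith)
  have hrx : 0 < r - x := by linarith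
  have hS : Real.sqrt r * Real.sqrt (r-x) ≤ Real.sqrt (r^2 - x^2) := by
    rw [← Real.sqrt_mul hr0.le]
    exact Real.sqrt_le_sqrt (by nlinarith)
  have hSpos : 0 < Real.sqrt r * Real.sqrt (r-x) := by positivity
  have hrpow : (r - x) ^ (-(1:ℝ)/2) = (Real.sqrt (r-x))⁻¹ := by
    rw [show (-(1:ℝ)/2) = -(1/2) by norm_num, Real.rpow_neg hrx.le, Real.sqrt_eq_rpow]
  have h1r : (0:ℝ) < 1 - r^2 := by nlinarith
  have h2x : (0:ℝ) < 1 - x^2 := by nlinarith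
  have hSS : 0 < Real.sqrt (r^2 - x^2) := Real.sqrt_pos.mpr (by nlinarith)
  have hdb : 0 < Real.pi * (1-x^2) * Real.sqrt (r^2-x^2) :=
    mul_pos (mul_pos Real.pi_pos h2x) hSS
  have hdc : 0 < Real.pi * (1-r^2) * Real.sqrt r * Real.sqrt (r-x) := by
    have := Real.sqrt_pos.mpr hr0
    have := Real.sqrt_pos.mpr hrx
    positivity
  have hApos : 0 ≤ Adens r x := by
    unfold Adens; exact div_nonneg hk.le hdb.le
  have hMpos : 0 ≤ M := by
    rw [hM]
    have := Real.sqrt_nonneg r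
    positivity
  rw [Real.norm_of_nonneg hApos, Real.norm_of_nonneg (by rw [hrpow]; positivity)]
  rw [hrpow]
  have hRHS : M * (Real.sqrt (r-x))⁻¹
      = Real.sqrt (1-r^2) / (Real.pi * (1-r^2) * Real.sqrt r * Real.sqrt (r-x)) := by
    rw [hM]
    have h1 : Real.sqrt (r-x) ≠ 0 := (Real.sqrt_pos.mpr hrx).ne'
    have h2 : Real.pi * (1 - r ^ 2) * Real.sqrt r ≠ 0 := by
      have := Real.sqrt_pos.mpr hr0; positivity
    field_simp
  rw [hRHS]
  unfold Adens
  apply div_le_div_of_nonneg_left hk.le hdc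
  calc Real.pi * (1-r^2) * Real.sqrt r * Real.sqrt (r-x)
      = Real.pi * (1-r^2) * (Real.sqrt r * Real.sqrt (r-x)) := by ring
    _ ≤ Real.pi * (1-x^2) * Real.sqrt (r^2-x^2) := by
        apply mul_le_mul (by nlinarith [Real.pi_pos]) hS hSpos.le (by nlinarith [Real.pi_pos])

lemma Adens_intInt_right (r : ℝ) (hr0 : 0 < r) (hr1 : r < 1) :
    IntervalIntegrable (Adens r) volume 0 r :=
  (intervalIntegrable_iff_integrableOn_Ioo_of_le hr0.le).mpr (Adens_intOn_right r hr0 hr1)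

lemma Adens_intInt (r : ℝ) (hr0 : 0 < r) (hr1 : r < 1) :
    IntervalIntegrable (Adens r) volume (-r) r := by
  have hR := Adens_intInt_right r hr0 hr1
  have hL : IntervalIntegrable (Adens r) volume (-r) 0 := by
    have := ((IntervalIntegrable.iff_comp_neg).mp hR)
    simp only [neg_zero] at this
    have h2 : (fun x => Adens r (-x)) = Adens r := funext fun x => Adens_even r x
    rw [h2] at this
    exact this.symm
  exact hL.trans hR

lemma Adens_deriv (r : ℝ) (hr0 : 0 < r) (hr1 : r < 1) {x : ℝ} (hx : x ∈ Ioo (-r) r) :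
    HasDerivAt (fun y => (1/Real.pi) * Real.arctan (Real.sqrt (1-r^2) * y / Real.sqrt (r^2 - y^2)))
      (Adens r x) x := by
  have hs : 0 < r^2 - x^2 := by nlinarith [hx.1, hx.2]
  have hss : 0 < Real.sqrt (r^2 - x^2) := Real.sqrt_pos.mpr hs
  have hsq : Real.sqrt (r^2 - x^2) ^ 2 = r^2 - x^2 := Real.sq_sqrt hs.le
  have hk : 0 < Real.sqrt (1 - r^2) := Real.sqrt_pos.mpr (by nlinarith)
  have hksq : Real.sqrt (1 - r^2) ^ 2 = 1 - r^2 := Real.sq_sqrt (by nlinarith)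
  have h1x : 0 < 1 - x^2 := by nlinarith
  -- derivative of inner sqrt
  have hsqrt : HasDerivAt (fun y : ℝ => Real.sqrt (r^2 - y^2)) (-x / Real.sqrt (r^2 - x^2)) x := by
    have h1 : HasDerivAt (fun y : ℝ => r^2 - y^2) (-(2*x)) x := by
      simpa using ((hasDerivAt_pow 2 x).const_sub (r^2))
    have := (Real.hasDerivAt_sqrt hs.ne').comp x h1
    refine this.congr_deriv ?_
    symm
    field_simp
  have hg : HasDerivAt (fun y => Real.sqrt (1-r^2) * y / Real.sqrt (r^2 - y^2))
      ((Real.sqrt (1-r^2) * Real.sqrt (r^2-x^2) - Real.sqrt (1-r^2) * x * (-x / Real.sqrt (r^2-x^2))) / (Real.sqrt (r^2-x^2))^2) x := by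
    simpa using ((hasDerivAt_id x).const_mul (Real.sqrt (1-r^2))).fun_div hsqrt hss.ne'
  have harc := (Real.hasDerivAt_arctan (Real.sqrt (1-r^2) * x / Real.sqrt (r^2 - x^2))).comp x hg
  have := harc.const_mul (1/Real.pi)
  refine this.congr_deriv ?_
  symm
  unfold Adens
  have h1 : 1 + (Real.sqrt (1-r^2) * x / Real.sqrt (r^2-x^2))^2 = r^2*(1-x^2)/(Real.sqrt (r^2-x^2))^2 := by
    rw [div_pow, mul_pow, hksq, hsq]
    field_simp
    ring
  rw [h1]
  rw [hsq]
  have hr2 : (0:ℝ) < r^2 := by positivity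
  field_simp
  linear_combination (-1 : ℝ) * hsq

lemma Adens_half (r : ℝ) (hr0 : 0 < r) (hr1 : r < 1) :
    ∫ x in (0:ℝ)..r, Adens r x = 1/2 := by
  set K := Real.sqrt (1-r^2) with hK
  set F : ℝ → ℝ := fun y => (1/Real.pi) * Real.arctan (K * y / Real.sqrt (r^2 - y^2)) with hF
  set G : ℝ → ℝ := fun t => ∫ x in (0:ℝ)..t, Adens r x with hG
  have hIcc : IntegrableOn (Adens r) (Icc 0 r) := by
    exact (Adens_intOn_right r hr0 hr1).congr_set_ae (Ioo_ae_eq_Icc (μ := volume)).symm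
  have hGcont : ContinuousOn G (Icc 0 r) := by
    have := intervalIntegral.continuousOn_primitive_interval
      (f := Adens r) (a := 0) (b := r) (μ := volume) (by rwa [uIcc_of_le hr0.le])
    rwa [uIcc_of_le hr0.le] at this
  have hstep : ∀ t ∈ Ico (0:ℝ) r, G t = F t := by
    intro t ht
    have hsub : uIcc 0 t ⊆ Ioo (-r) r := by
      rw [uIcc_of_le ht.1]
      intro y hy
      exact ⟨by linarith [hy.1], lt_of_le_of_lt hy.2 ht.2⟩
    have hInt : IntervalIntegrable (Adens r) volume 0 t := by
      apply (Adens_intInt_right r hr0 hr1).mono_set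
      rw [uIcc_of_le ht.1, uIcc_of_le hr0.le]
      exact Icc_subset_Icc le_rfl ht.2.le
    have := intervalIntegral.integral_eq_sub_of_hasDerivAt
      (f := F) (f' := Adens r) (a := 0) (b := t)
      (fun x hx => Adens_deriv r hr0 hr1 (hsub hx)) hInt
    rw [hG]
    simp only [this, hF]
    norm_num
  have hFtend : Tendsto F (nhdsWithin r (Iio r)) (nhds (1/2)) := by
    have hKr : 0 < K * r := by
      have : 0 < K := Real.sqrt_pos.mpr (by nlinarith)
      positivity
    have hden : Tendsto (fun y => Real.sqrt (r^2 - y^2)) (nhdsWithin r (Iio r)) (nhdsWithin 0 (Ioi 0)) := by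
      apply tendsto_nhdsWithin_of_tendsto_nhds_of_eventually_within
      · have : Tendsto (fun y : ℝ => Real.sqrt (r^2 - y^2)) (nhds r) (nhds (Real.sqrt (r^2-r^2))) := by
          exact (Real.continuous_sqrt.comp (by continuity)).tendsto r
        simpa using this.mono_left nhdsWithin_le_nhds
      · filter_upwards [Ioo_mem_nhdsLT_of_mem (show r ∈ Ioc (-r) r by constructor <;> linarith)] with y hy
        exact Real.sqrt_pos.mpr (by nlinarith [hy.1, hy.2])
    have hinv : Tendsto (fun y => (Real.sqrt (r^2 - y^2))⁻¹) (nhdsWithin r (Iio r)) atTop :=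
      tendsto_inv_nhdsGT_zero.comp hden
    have hnum : Tendsto (fun y => K * y) (nhdsWithin r (Iio r)) (nhds (K * r)) :=
      ((continuous_const.mul continuous_id).tendsto r).mono_left nhdsWithin_le_nhds
    have hg : Tendsto (fun y => K * y / Real.sqrt (r^2 - y^2)) (nhdsWithin r (Iio r)) atTop := by
      simp only [div_eq_mul_inv]
      exact Filter.Tendsto.pos_mul_atTop hKr hnum hinv
    have harct : Tendsto (fun y => Real.arctan (K * y / Real.sqrt (r^2 - y^2)))
        (nhdsWithin r (Iio r)) (nhds (Real.pi/2)) :=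
      (Real.tendsto_arctan_atTop.mono_right nhdsWithin_le_nhds).comp hg
    have := harct.const_mul (1/Real.pi)
    rw [hF]
    convert this using 2
    field_simp
  have hne : (nhdsWithin r (Ioo (0:ℝ) r)).NeBot := right_nhdsWithin_Ioo_neBot hr0
  have h1 : Tendsto G (nhdsWithin r (Ioo 0 r)) (nhds (G r)) := by
    have := (hGcont r (right_mem_Icc.mpr hr0.le)).tendsto
    exact this.mono_left (nhdsWithin_mono r Ioo_subset_Icc_self)
  have h2 : Tendsto G (nhdsWithin r (Ioo 0 r)) (nhds (1/2)) := by
    apply Filter.Tendsto.congr' _ (hFtend.mono_left (nhdsWithin_mono r Ioo_subset_Iio_self))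
    filter_upwards [self_mem_nhdsWithin] with y hy
    exact (hstep y ⟨hy.1.le, hy.2⟩).symm
  have : G r = 1/2 := tendsto_nhds_unique h1 h2
  exact this

lemma density_integral (r : ℝ) (hr0 : 0 < r) (hr1 : r < 1) (C : ℝ) :
    ∫ x in (-r)..r, Adens r x * (1 - C * x) = 1 := by
  have hA := Adens_intInt r hr0 hr1
  have hAL : IntervalIntegrable (Adens r) volume (-r) 0 := by
    apply hA.mono_set
    rw [uIcc_of_le (by linarith : (-r:ℝ) ≤ 0), uIcc_of_le (by linarith : (-r:ℝ) ≤ r)]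
    exact Icc_subset_Icc le_rfl hr0.le
  have hAR := Adens_intInt_right r hr0 hr1
  have hxA : IntervalIntegrable (fun x => x * Adens r x) volume (-r) r :=
    hA.continuousOn_mul continuous_id.continuousOn
  have hxAL : IntervalIntegrable (fun x => x * Adens r x) volume (-r) 0 :=
    hAL.continuousOn_mul continuous_id.continuousOn
  have hxAR : IntervalIntegrable (fun x => x * Adens r x) volume 0 r :=
    hAR.continuousOn_mul continuous_id.continuousOn
  -- left integral of A equals right one
  have hevenA : ∫ x in (-r:ℝ)..0, Adens r x = ∫ x in (0:ℝ)..r, Adens r x := by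
    have := intervalIntegral.integral_comp_neg (a := (0:ℝ)) (b := r) (fun x => Adens r x)
    simp only [neg_zero] at this
    rw [← this]
    congr 1
    funext x
    exact Adens_even r x
  have hoddA : ∫ x in (-r:ℝ)..0, x * Adens r x = -∫ x in (0:ℝ)..r, x * Adens r x := by
    have := intervalIntegral.integral_comp_neg (a := (0:ℝ)) (b := r) (fun x => x * Adens r x)
    simp only [neg_zero] at this
    rw [← this, ← intervalIntegral.integral_neg]
    congr 1
    funext x
    rw [Adens_even r x]
    ring
  have hsplitA : ∫ x in (-r:ℝ)..r, Adens r x = 1 := by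
    rw [← intervalIntegral.integral_add_adjacent_intervals hAL hAR, hevenA,
      Adens_half r hr0 hr1]
    norm_num
  have hsplitxA : ∫ x in (-r:ℝ)..r, x * Adens r x = 0 := by
    rw [← intervalIntegral.integral_add_adjacent_intervals hxAL hxAR, hoddA]
    ring
  have hrw : (fun x => Adens r x * (1 - C * x)) = fun x => Adens r x - C * (x * Adens r x) := by
    funext x; ring
  rw [hrw, intervalIntegral.integral_sub hA (hxA.const_mul C),
    intervalIntegral.integral_const_mul, hsplitA, hsplitxA]
  ring

open Matrix

/-- The limit density `f(x;φ)` integrates to one over `(-|a|, |a|)`. -/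
theorem density_integral_one (a b c d : ℂ)
    (hU : !![a, b; c, d] ∈ Matrix.unitaryGroup (Fin 2) ℂ)
    (habcd : a * b * c * d ≠ 0)
    (α β : ℂ) (hφ : ‖α‖ ^ 2 + ‖β‖ ^ 2 = 1) :
    ∫ x in (-(‖a‖))..(‖a‖),
        Real.sqrt (1 - ‖a‖ ^ 2) /
            (Real.pi * (1 - x ^ 2) * Real.sqrt (‖a‖ ^ 2 - x ^ 2)) *
          (1 - (‖α‖ ^ 2 - ‖β‖ ^ 2 +
            (a * α * (starRingEnd ℂ) (b * β) +
              (starRingEnd ℂ) (a * α) * (b * β)).re / ‖a‖ ^ 2) * x) = 1 := by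
  have ha : a ≠ 0 := by intro h; apply habcd; simp [h]
  have hb : b ≠ 0 := by intro h; apply habcd; simp [h]
  have hr0 : 0 < ‖a‖ := norm_pos_iff.mpr ha
  have hr1 : ‖a‖ < 1 := by
    have h := Matrix.mem_unitaryGroup_iff.mp hU
    have h00 : (!![a, b; c, d] * star !![a, b; c, d]) 0 0 = (1 : Matrix (Fin 2) (Fin 2) ℂ) 0 0 := by
      rw [h]
    simp [Matrix.mul_apply, Fin.sum_univ_two, Matrix.star_apply, Matrix.one_apply] at h00
    have habs : ‖a‖ ^ 2 + ‖b‖ ^ 2 = 1 := by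
      have := congrArg Complex.re h00
      simpa [Complex.mul_conj, ← Complex.normSq_eq_norm_sq] using this
    have hbpos : 0 < ‖b‖ := norm_pos_iff.mpr hb
    nlinarith [norm_nonneg a]
  exact density_integral (‖a‖) hr0 hr1 _
end

section
/- For any unit vector φ = (α,β) ∈ ℂ², the mean of the limit density is ∫_{−|a|}^{|a|} x · f(x; φ) dx = − ( |α|² − |β|² + (aα·conj(bβ) + conj(aα)·bβ)/|a|² ) · (1 − √(1−|a|²)). -/
open Matrix Real Filter Set MeasureTheory intervalIntegral

set_option maxHeartbeats 1000000 in
private lemma density_mean_key (r m : ℝ) (hr0 : 0 < r) (hr1 : r < 1) :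
    ∫ x in (-r)..r,
        x * (Real.sqrt (1 - r ^ 2) / (Real.pi * (1 - x ^ 2) * Real.sqrt (r ^ 2 - x ^ 2)) *
          (1 - m * x)) = -m * (1 - Real.sqrt (1 - r ^ 2)) := by
  have hr2 : r ^ 2 < 1 := by nlinarith
  set s : ℝ := Real.sqrt (1 - r ^ 2) with hs_def
  have hs0 : 0 < s := Real.sqrt_pos.2 (by linarith)
  have hs2 : s ^ 2 = 1 - r ^ 2 := Real.sq_sqrt (by linarith)
  have hpi : (0:ℝ) < Real.pi := Real.pi_pos
  set F : ℝ → ℝ := fun x => (s / Real.pi) *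
    (-(1/s) * Real.arctan (Real.sqrt (r ^ 2 - x ^ 2) / s)
      + m * Real.arcsin (x / r)
      - (m / s) * Real.arctan (x * s / Real.sqrt (r ^ 2 - x ^ 2))) with hF_def
  set g : ℝ → ℝ := fun x =>
      x * (s / (Real.pi * (1 - x ^ 2) * Real.sqrt (r ^ 2 - x ^ 2)) * (1 - m * x)) with hg_def
  -- the derivative of `arcsin (x/r)` on the open interval
  have harc : ∀ x ∈ Ioo (-r) r,
      HasDerivAt (fun y => Real.arcsin (y / r)) ((Real.sqrt (r ^ 2 - x ^ 2))⁻¹) x := by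
    intro x hx
    have hxr : x ^ 2 < r ^ 2 := by rcases hx with ⟨h1, h2⟩; nlinarith
    have hq0 : 0 < r ^ 2 - x ^ 2 := by linarith
    have hq : 0 < Real.sqrt (r ^ 2 - x ^ 2) := Real.sqrt_pos.2 hq0
    have hxne1 : x / r ≠ -1 := by
      intro h
      rw [div_eq_iff hr0.ne'] at h
      have := hx.1
      nlinarith
    have hxne2 : x / r ≠ 1 := by
      intro h
      rw [div_eq_iff hr0.ne'] at h
      have := hx.2
      nlinarith
    have hid : HasDerivAt (fun y : ℝ => y / r) (1 / r) x := by
      simpa using (hasDerivAt_id x).div_const r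
    have h := (Real.hasDerivAt_arcsin hxne1 hxne2).comp x hid
    have hsq : Real.sqrt (1 - (x / r) ^ 2) = Real.sqrt (r ^ 2 - x ^ 2) / r := by
      rw [show 1 - (x / r) ^ 2 = (r ^ 2 - x ^ 2) / r ^ 2 by field_simp,
        Real.sqrt_div hq0.le, Real.sqrt_sq hr0.le]
    refine h.congr_deriv ?_
    rw [hsq]
    field_simp
  have hderiv : ∀ x ∈ Ioo (-r) r, HasDerivAt F (g x) x := by
    intro x hx
    have hxr : x ^ 2 < r ^ 2 := by rcases hx with ⟨h1, h2⟩; nlinarith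
    have hq0 : 0 < r ^ 2 - x ^ 2 := by linarith
    set q : ℝ := Real.sqrt (r ^ 2 - x ^ 2) with hq_def
    have hq : 0 < q := Real.sqrt_pos.2 hq0
    have hq2 : q ^ 2 = r ^ 2 - x ^ 2 := Real.sq_sqrt hq0.le
    have h1x : 0 < 1 - x ^ 2 := by nlinarith
    have hqd : HasDerivAt (fun y => Real.sqrt (r ^ 2 - y ^ 2)) (-x / q) x := by
      have hinner : HasDerivAt (fun y : ℝ => r ^ 2 - y ^ 2) (-(2 * x)) x := by
        simpa using ((hasDerivAt_pow 2 x).const_sub (r ^ 2))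
      have := (Real.hasDerivAt_sqrt (ne_of_gt hq0)).comp x hinner
      refine this.congr_deriv ?_
      rw [← hq_def]
      field_simp
    -- term 1
    have h1 : HasDerivAt (fun y => Real.arctan (Real.sqrt (r ^ 2 - y ^ 2) / s))
        ((1 / (1 + (q / s) ^ 2)) * (-x / q / s)) x := by
      have := (Real.hasDerivAt_arctan (q / s)).comp x (hqd.div_const s); exact this
    have e1 : 1 + (q / s) ^ 2 = (1 - x ^ 2) / s ^ 2 := by
      field_simp
      linarith
    have d1 : (1 / (1 + (q / s) ^ 2)) * (-x / q / s) = -(x * s) / (q * (1 - x ^ 2)) := by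
      rw [e1]
      field_simp
    -- term 2
    have h2 := harc x hx
    -- term 3
    have hin : HasDerivAt (fun y => y * s / Real.sqrt (r ^ 2 - y ^ 2))
        ((s * q - x * s * (-x / q)) / q ^ 2) x := by
      have h := ((hasDerivAt_id x).mul_const s).div hqd (ne_of_gt hq)
      simp only [id_eq] at h
      refine h.congr_deriv ?_
      rw [← hq_def]
      ring
    have h3 : HasDerivAt (fun y => Real.arctan (y * s / Real.sqrt (r ^ 2 - y ^ 2)))
        ((1 / (1 + (x * s / q) ^ 2)) * ((s * q - x * s * (-x / q)) / q ^ 2)) x := by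
      have := (Real.hasDerivAt_arctan (x * s / q)).comp x hin; exact this
    have e3 : 1 + (x * s / q) ^ 2 = r ^ 2 * (1 - x ^ 2) / q ^ 2 := by
      field_simp
      nlinarith
    have hnum : s * q - x * s * (-x / q) = s * r ^ 2 / q := by
      field_simp
      linear_combination hq2
    have d3 : (1 / (1 + (x * s / q) ^ 2)) * ((s * q - x * s * (-x / q)) / q ^ 2)
        = s / (q * (1 - x ^ 2)) := by
      rw [e3, hnum]
      field_simp
    have hcomb := (((h1.const_mul (-(1/s))).add (h2.const_mul m)).sub
      (h3.const_mul (m / s))).const_mul (s / Real.pi)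
    rw [d1] at hcomb
    rw [d3] at hcomb
    rw [← hq_def] at hcomb
    refine hcomb.congr_deriv ?_
    simp only [hg_def]
    field_simp
    ring
  -- integrability
  have hψ : IntegrableOn (fun x => (Real.sqrt (r ^ 2 - x ^ 2))⁻¹) (Ioc (-r) r) := by
    apply integrableOn_deriv_of_nonneg _ harc
    · intro x _
      positivity
    · exact (Real.continuous_arcsin.comp (continuous_id.div_const r)).continuousOn
  set h : ℝ → ℝ := fun x => x * s * (1 - m * x) / (Real.pi * (1 - x ^ 2)) with hh_def
  have hhc : ContinuousOn h (Icc (-r) r) := by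
    apply ContinuousOn.div
    · exact ((continuous_id.mul continuous_const).mul
        (continuous_const.sub (continuous_const.mul continuous_id))).continuousOn
    · exact (continuous_const.mul (continuous_const.sub (continuous_pow 2))).continuousOn
    · intro x hx
      rcases hx with ⟨hx1, hx2⟩
      have hx2' : x ^ 2 < 1 := by nlinarith
      have : 0 < Real.pi * (1 - x ^ 2) := by nlinarith [Real.pi_pos]
      exact this.ne'
  obtain ⟨C, hC⟩ := (isCompact_Icc (a := -r) (b := r)).exists_bound_of_continuousOn hhc
  have hC0 : 0 ≤ C := le_trans (norm_nonneg _) (hC (-r) (by constructor <;> linarith))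
  have hgIoo : IntegrableOn g (Ioo (-r) r) := by
    have hgc : ContinuousOn g (Ioo (-r) r) := by
      apply ContinuousOn.mul continuousOn_id
      apply ContinuousOn.mul _
        (continuous_const.sub (continuous_const.mul continuous_id)).continuousOn
      apply ContinuousOn.div continuousOn_const
      · exact ((continuous_const.mul (continuous_const.sub (continuous_pow 2))).mul
          (Real.continuous_sqrt.comp (continuous_const.sub (continuous_pow 2)))).continuousOn
      · intro x hx
        rcases hx with ⟨hx1, hx2⟩
        have h1 : x ^ 2 < r ^ 2 := by nlinarith
        have h2 : x ^ 2 < 1 := by nlinarith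
        have hs' : 0 < Real.sqrt (r ^ 2 - x ^ 2) := Real.sqrt_pos.2 (by linarith)
        exact (mul_pos (mul_pos Real.pi_pos (by linarith)) hs').ne'
    apply Integrable.mono' ((hψ.mono_set Ioo_subset_Ioc_self).const_mul C)
      (hgc.aestronglyMeasurable measurableSet_Ioo)
    rw [ae_restrict_iff' measurableSet_Ioo]
    filter_upwards with x hx
    rcases hx with ⟨hx1, hx2⟩
    have h1 : x ^ 2 < r ^ 2 := by nlinarith
    have h2 : x ^ 2 < 1 := by nlinarith
    have hq : 0 < Real.sqrt (r ^ 2 - x ^ 2) := Real.sqrt_pos.2 (by linarith)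
    have h1x : (0:ℝ) < 1 - x ^ 2 := by linarith
    have hgx : g x = h x * (Real.sqrt (r ^ 2 - x ^ 2))⁻¹ := by
      rw [hg_def, hh_def]
      field_simp
    rw [hgx, norm_mul, norm_inv, Real.norm_of_nonneg hq.le]
    apply mul_le_mul_of_nonneg_right _ (by positivity)
    exact hC x ⟨hx1.le, hx2.le⟩
  have hint : IntervalIntegrable g volume (-r) r := by
    rw [intervalIntegrable_iff_integrableOn_Ioo_of_le (by linarith)]
    exact hgIoo
  -- endpoint limits
  have hT1 : ∀ c : ℝ, Tendsto (fun x => Real.arctan (Real.sqrt (r ^ 2 - x ^ 2) / s))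
      (nhds c) (nhds (Real.arctan (Real.sqrt (r ^ 2 - c ^ 2) / s))) := by
    intro c
    exact (Real.continuous_arctan.comp ((Real.continuous_sqrt.comp
      (continuous_const.sub (continuous_pow 2))).div_const s)).tendsto c
  have hT2 : ∀ c : ℝ, Tendsto (fun x => Real.arcsin (x / r))
      (nhds c) (nhds (Real.arcsin (c / r))) := by
    intro c
    exact (Real.continuous_arcsin.comp (continuous_id.div_const r)).tendsto c
  have hqtend : ∀ (l : Filter ℝ) (c : ℝ), Ioo (-r) r ∈ l → Tendsto id l (nhds c) →
      c ^ 2 = r ^ 2 →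
      Tendsto (fun x => Real.sqrt (r ^ 2 - x ^ 2)) l (nhdsWithin 0 (Ioi 0)) := by
    intro l c hmem hc hc2
    apply tendsto_nhdsWithin_of_tendsto_nhds_of_eventually_within
    · have : Tendsto (fun x => Real.sqrt (r ^ 2 - x ^ 2)) (nhds c)
          (nhds (Real.sqrt (r ^ 2 - c ^ 2))) :=
        (Real.continuous_sqrt.comp (continuous_const.sub (continuous_pow 2))).tendsto c
      have := this.comp hc
      simpa [hc2] using this
    · filter_upwards [hmem] with x hx
      rcases hx with ⟨hx1, hx2⟩
      have : x ^ 2 < r ^ 2 := by nlinarith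
      exact Real.sqrt_pos.2 (by linarith)
  have hmemb : Ioo (-r) r ∈ nhdsWithin r (Iio r) :=
    Ioo_mem_nhdsLT_of_mem ⟨by linarith, le_refl r⟩
  have hmema : Ioo (-r) r ∈ nhdsWithin (-r) (Ioi (-r)) :=
    Ioo_mem_nhdsGT_of_mem ⟨le_refl (-r), by linarith⟩
  -- T3 at right endpoint
  have hT3b : Tendsto (fun x => Real.arctan (x * s / Real.sqrt (r ^ 2 - x ^ 2)))
      (nhdsWithin r (Iio r)) (nhds (Real.pi / 2)) := by
    have hq := hqtend (nhdsWithin r (Iio r)) r hmemb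
      (tendsto_id.mono_left nhdsWithin_le_nhds) rfl
    have hinv : Tendsto (fun x => (Real.sqrt (r ^ 2 - x ^ 2))⁻¹)
        (nhdsWithin r (Iio r)) atTop := tendsto_inv_nhdsGT_zero.comp hq
    have hnum : Tendsto (fun x : ℝ => x * s) (nhdsWithin r (Iio r)) (nhds (r * s)) :=
      ((continuous_id.mul continuous_const).tendsto r).mono_left nhdsWithin_le_nhds
    have hmul : Tendsto (fun x => x * s * (Real.sqrt (r ^ 2 - x ^ 2))⁻¹)
        (nhdsWithin r (Iio r)) atTop := hnum.pos_mul_atTop (by positivity) hinv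
    have := Real.tendsto_arctan_atTop.comp hmul
    refine (this.mono_right nhdsWithin_le_nhds).congr fun x => ?_
    simp [Function.comp, div_eq_mul_inv]
  -- T3 at left endpoint
  have hT3a : Tendsto (fun x => Real.arctan (x * s / Real.sqrt (r ^ 2 - x ^ 2)))
      (nhdsWithin (-r) (Ioi (-r))) (nhds (-(Real.pi / 2))) := by
    have hq := hqtend (nhdsWithin (-r) (Ioi (-r))) (-r) hmema
      (tendsto_id.mono_left nhdsWithin_le_nhds) (by ring)
    have hinv : Tendsto (fun x => (Real.sqrt (r ^ 2 - x ^ 2))⁻¹)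
        (nhdsWithin (-r) (Ioi (-r))) atTop := tendsto_inv_nhdsGT_zero.comp hq
    have hnum : Tendsto (fun x : ℝ => x * s) (nhdsWithin (-r) (Ioi (-r)))
        (nhds (-r * s)) :=
      ((continuous_id.mul continuous_const).tendsto (-r)).mono_left nhdsWithin_le_nhds
    have hmul : Tendsto (fun x => x * s * (Real.sqrt (r ^ 2 - x ^ 2))⁻¹)
        (nhdsWithin (-r) (Ioi (-r))) atBot := by
      apply hnum.neg_mul_atTop _ hinv
      nlinarith
    have := Real.tendsto_arctan_atBot.comp hmul
    refine (this.mono_right nhdsWithin_le_nhds).congr fun x => ?_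
    simp [Function.comp, div_eq_mul_inv]
  -- combine
  have hFb : Tendsto F (nhdsWithin r (Iio r))
      (nhds ((s / Real.pi) * (-(1/s) * 0 + m * (Real.pi / 2) - (m / s) * (Real.pi / 2)))) := by
    apply Tendsto.const_mul
    have t1 : Tendsto (fun x => Real.arctan (Real.sqrt (r ^ 2 - x ^ 2) / s))
        (nhdsWithin r (Iio r)) (nhds 0) := by
      have := (hT1 r).mono_left (nhdsWithin_le_nhds (s := Iio r))
      simpa using this
    have t2 : Tendsto (fun x => Real.arcsin (x / r))
        (nhdsWithin r (Iio r)) (nhds (Real.pi / 2)) := by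
      have := (hT2 r).mono_left (nhdsWithin_le_nhds (s := Iio r))
      simpa [div_self hr0.ne'] using this
    exact ((t1.const_mul (-(1/s))).add (t2.const_mul m)).sub (hT3b.const_mul (m / s))
  have hFa : Tendsto F (nhdsWithin (-r) (Ioi (-r)))
      (nhds ((s / Real.pi) *
        (-(1/s) * 0 + m * (-(Real.pi / 2)) - (m / s) * (-(Real.pi / 2))))) := by
    apply Tendsto.const_mul
    have t1 : Tendsto (fun x => Real.arctan (Real.sqrt (r ^ 2 - x ^ 2) / s))
        (nhdsWithin (-r) (Ioi (-r))) (nhds 0) := by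
      have := (hT1 (-r)).mono_left (nhdsWithin_le_nhds (s := Ioi (-r)))
      simpa using this
    have t2 : Tendsto (fun x => Real.arcsin (x / r))
        (nhdsWithin (-r) (Ioi (-r))) (nhds (-(Real.pi / 2))) := by
      have := (hT2 (-r)).mono_left (nhdsWithin_le_nhds (s := Ioi (-r)))
      simpa [neg_div, div_self hr0.ne'] using this
    exact ((t1.const_mul (-(1/s))).add (t2.const_mul m)).sub (hT3a.const_mul (m / s))
  have hFTC := intervalIntegral.integral_eq_sub_of_hasDerivAt_of_tendsto
    (by linarith : -r < r) hderiv hint hFa hFb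
  calc ∫ x in (-r)..r, g x
      = (s / Real.pi) * (-(1/s) * 0 + m * (Real.pi / 2) - (m / s) * (Real.pi / 2)) -
        (s / Real.pi) *
          (-(1/s) * 0 + m * (-(Real.pi / 2)) - (m / s) * (-(Real.pi / 2))) := hFTC
    _ = -m * (1 - s) := by field_simp; ring

/-- The mean of the limit density:
`∫ x f(x;φ) dx = -(|α|²-|β|² + (aα conj(bβ) + conj(aα) bβ)/|a|²)(1 - √(1-|a|²))`. -/
theorem density_mean (a b c d : ℂ)
    (hU : !![a, b; c, d] ∈ Matrix.unitaryGroup (Fin 2) ℂ)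
    (habcd : a * b * c * d ≠ 0)
    (α β : ℂ) (hφ : ‖α‖ ^ 2 + ‖β‖ ^ 2 = 1) :
    ∫ x in (-(‖a‖))..(‖a‖),
        x * (Real.sqrt (1 - ‖a‖ ^ 2) /
            (Real.pi * (1 - x ^ 2) * Real.sqrt (‖a‖ ^ 2 - x ^ 2)) *
          (1 - (‖α‖ ^ 2 - ‖β‖ ^ 2 +
            (a * α * (starRingEnd ℂ) (b * β) +
              (starRingEnd ℂ) (a * α) * (b * β)).re / ‖a‖ ^ 2) * x)) =
      -(‖α‖ ^ 2 - ‖β‖ ^ 2 +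
          (a * α * (starRingEnd ℂ) (b * β) +
            (starRingEnd ℂ) (a * α) * (b * β)).re / ‖a‖ ^ 2) *
        (1 - Real.sqrt (1 - ‖a‖ ^ 2)) := by
  have ha : a ≠ 0 := by
    intro h; apply habcd; rw [h]; ring
  have hb : b ≠ 0 := by
    intro h; apply habcd; rw [h]; ring
  have ha0 : 0 < ‖a‖ := by
    exact norm_pos_iff.mpr ha
  have hb0 : 0 < ‖b‖ := by
    exact norm_pos_iff.mpr hb
  have hrow : ‖a‖ ^ 2 + ‖b‖ ^ 2 = 1 := by
    have h1 := (Matrix.mem_unitaryGroup_iff).1 hU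
    have h2 : (!![a, b; c, d] * star !![a, b; c, d]) 0 0 = (1 : Matrix (Fin 2) (Fin 2) ℂ) 0 0 := by
      rw [h1]
    simp [Matrix.mul_apply, Fin.sum_univ_two, Matrix.one_apply, star_eq_conjTranspose,
      Matrix.conjTranspose_apply] at h2
    have h3 : (a * (starRingEnd ℂ) a + b * (starRingEnd ℂ) b).re = 1 := by
      rw [h2]; simp
    simpa [Complex.mul_conj', Complex.mul_conj, Complex.normSq_eq_norm_sq,
      ← Complex.ofReal_pow] using h3
  have ha1 : ‖a‖ < 1 := by
    nlinarith [sq_nonneg (‖b‖), norm_nonneg a]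
  exact density_mean_key (‖a‖)
    (‖α‖ ^ 2 - ‖β‖ ^ 2 +
      (a * α * (starRingEnd ℂ) (b * β) + (starRingEnd ℂ) (a * α) * (b * β)).re /
        ‖a‖ ^ 2) ha0 ha1
end

section
/- For any unit vector φ = (α,β) ∈ ℂ², the second moment of the limit density is ∫_{−|a|}^{|a|} x² · f(x; φ) dx = 1 − √(1−|a|²); in particular it is independent of φ. -/
open Matrix

section Aux

open Real intervalIntegral MeasureTheory

private lemma dsm_integrable_inv_sqrt (r : ℝ) (hr0 : 0 < r) :
    IntervalIntegrable (fun x => (Real.sqrt (r^2 - x^2))⁻¹) volume (-r) r := by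
  have hmeas : ∀ u v : ℝ, AEStronglyMeasurable (fun x => (Real.sqrt (r^2 - x^2))⁻¹)
      (volume.restrict (Set.uIoc u v)) := by
    intro u v
    exact ((continuous_const.sub (continuous_pow 2)).sqrt.measurable.inv).aestronglyMeasurable
  have half : IntervalIntegrable (fun x : ℝ => x ^ (-(1/2 : ℝ))) volume 0 r :=
    intervalIntegrable_rpow' (by norm_num)
  have h1 : IntervalIntegrable (fun x => (Real.sqrt (r^2 - x^2))⁻¹) volume 0 r := by
    have base : IntervalIntegrable (fun x => (Real.sqrt r)⁻¹ * (r - x) ^ (-(1/2:ℝ))) volume 0 r := by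
      have := ((half.comp_sub_left r).const_mul ((Real.sqrt r)⁻¹)).symm
      simpa using this
    apply IntervalIntegrable.mono_fun base (hmeas 0 r)
    rw [Filter.EventuallyLE, ae_restrict_iff' measurableSet_uIoc]
    refine Filter.Eventually.of_forall (fun x hx => ?_)
    rw [Set.uIoc_of_le hr0.le] at hx
    obtain ⟨hx0, hxr⟩ := hx
    have hrx : 0 ≤ r - x := by linarith
    have h2 : (r - x) ^ (-(1/2:ℝ)) = (Real.sqrt (r-x))⁻¹ := by
      rw [Real.rpow_neg hrx, ← Real.sqrt_eq_rpow]
    rw [Real.norm_eq_abs, Real.norm_eq_abs, abs_of_nonneg (inv_nonneg.2 (Real.sqrt_nonneg _)),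
      abs_of_nonneg (by positivity : (0:ℝ) ≤ (Real.sqrt r)⁻¹ * (r - x) ^ (-(1/2:ℝ))), h2,
      ← mul_inv]
    rcases eq_or_lt_of_le hxr with he | hlt
    · simp [← he]
    · have key : Real.sqrt r * Real.sqrt (r - x) ≤ Real.sqrt (r^2 - x^2) := by
        rw [← Real.sqrt_mul hr0.le]
        apply Real.sqrt_le_sqrt; nlinarith
      exact inv_anti₀ (mul_pos (Real.sqrt_pos.2 hr0) (Real.sqrt_pos.2 (by linarith))) key
  have h2 : IntervalIntegrable (fun x => (Real.sqrt (r^2 - x^2))⁻¹) volume (-r) 0 := by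
    have := (h1.comp_sub_left 0).symm
    simp only [zero_sub, sub_zero, neg_sq] at this
    simpa using this
  exact h2.trans h1

private lemma dsm_deriv_arcsin_div (r x : ℝ) (hr0 : 0 < r) (hx1 : -r < x) (hx2 : x < r) :
    HasDerivAt (fun y => Real.arcsin (y / r)) ((Real.sqrt (r^2 - x^2))⁻¹) x := by
  have hq : 0 < r^2 - x^2 := by nlinarith
  have h1 : x / r ≠ -1 := by
    intro h; rw [div_eq_iff hr0.ne'] at h; simp at h; nlinarith
  have h2 : x / r ≠ 1 := by
    intro h; rw [div_eq_iff hr0.ne'] at h; simp at h; nlinarith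
  have := (Real.hasDerivAt_arcsin h1 h2).comp x ((hasDerivAt_id x).div_const r)
  refine this.congr_deriv (Eq.symm ?_)
  have he : 1 - (x/r)^2 = (r^2 - x^2) / r^2 := by field_simp
  have hs : Real.sqrt (1 - (x/r)^2) = Real.sqrt (r^2 - x^2) / r := by
    rw [he, Real.sqrt_div hq.le, Real.sqrt_sq hr0.le]
  rw [hs]
  field_simp

private lemma dsm_deriv_sqrt (r x : ℝ) (hr0 : 0 < r) (hx1 : -r < x) (hx2 : x < r) :
    HasDerivAt (fun y => Real.sqrt (r^2 - y^2)) (-x / Real.sqrt (r^2 - x^2)) x := by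
  have hq : 0 < r^2 - x^2 := by nlinarith
  have inner : HasDerivAt (fun y : ℝ => r^2 - y^2) (-(2*x)) x := by
    simpa using ((hasDerivAt_pow 2 x).const_sub (r^2))
  have := (Real.hasDerivAt_sqrt hq.ne').comp x inner
  refine this.congr_deriv (Eq.symm ?_)
  have h0 : Real.sqrt (r^2 - x^2) ≠ 0 := by positivity
  field_simp

private lemma dsm_deriv_arctan (r x s : ℝ) (hr0 : 0 < r) (hr1 : r < 1) (hx1 : -r < x)
    (hx2 : x < r) (hs : s = Real.sqrt (1 - r^2)) :
    HasDerivAt (fun y => Real.arctan (Real.sqrt (r^2 - y^2) / s))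
      (-(s * x) / ((1 - x^2) * Real.sqrt (r^2 - x^2))) x := by
  have hq : 0 < r^2 - x^2 := by nlinarith
  have hs0 : 0 < s := by rw [hs]; apply Real.sqrt_pos.2; nlinarith
  have hs2 : s^2 = 1 - r^2 := by rw [hs, Real.sq_sqrt (by nlinarith)]
  have hsqrt := dsm_deriv_sqrt r x hr0 hx1 hx2
  have := (Real.hasDerivAt_arctan (Real.sqrt (r^2 - x^2) / s)).comp x (hsqrt.div_const s)
  refine this.congr_deriv (Eq.symm ?_)
  have hq0 : Real.sqrt (r^2 - x^2) ≠ 0 := by positivity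
  have hqq : Real.sqrt (r^2 - x^2) ^ 2 = r^2 - x^2 := Real.sq_sqrt hq.le
  have hx1' : 0 < 1 - x^2 := by nlinarith
  field_simp
  linear_combination (-x) * hs2 + (-x) * hqq

private lemma dsm_deriv_arcsin2 (r x s : ℝ) (hr0 : 0 < r) (hr1 : r < 1) (hx1 : -r < x)
    (hx2 : x < r) (hs : s = Real.sqrt (1 - r^2)) :
    HasDerivAt (fun y => Real.arcsin (s * y / (r * Real.sqrt (1 - y^2))))
      (s / ((1 - x^2) * Real.sqrt (r^2 - x^2))) x := by
  have hq : 0 < r^2 - x^2 := by nlinarith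
  have hp : 0 < 1 - x^2 := by nlinarith
  have hs0 : 0 < s := by rw [hs]; apply Real.sqrt_pos.2; nlinarith
  have hs2 : s^2 = 1 - r^2 := by rw [hs, Real.sq_sqrt (by nlinarith)]
  have hpq : Real.sqrt (1 - x^2) ^ 2 = 1 - x^2 := Real.sq_sqrt hp.le
  have hqq : Real.sqrt (r^2 - x^2) ^ 2 = r^2 - x^2 := Real.sq_sqrt hq.le
  have hp0 : Real.sqrt (1 - x^2) ≠ 0 := by positivity
  have hq0 : Real.sqrt (r^2 - x^2) ≠ 0 := by positivity
  have hsqrtp : HasDerivAt (fun y => Real.sqrt (1 - y^2)) (-x / Real.sqrt (1 - x^2)) x := by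
    have inner : HasDerivAt (fun y : ℝ => 1 - y^2) (-(2*x)) x := by
      simpa using ((hasDerivAt_pow 2 x).const_sub (1:ℝ))
    have := (Real.hasDerivAt_sqrt hp.ne').comp x inner
    refine this.congr_deriv (Eq.symm ?_)
    field_simp
  have hden : HasDerivAt (fun y => r * Real.sqrt (1 - y^2)) (r * (-x / Real.sqrt (1 - x^2))) x :=
    hsqrtp.const_mul r
  have hnum : HasDerivAt (fun y => s * y) s x := by
    simpa using (hasDerivAt_id x).const_mul s
  have hden0 : r * Real.sqrt (1 - x^2) ≠ 0 := by positivity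
  have hu : HasDerivAt (fun y => s * y / (r * Real.sqrt (1 - y^2)))
      ((s * (r * Real.sqrt (1 - x^2)) - s * x * (r * (-x / Real.sqrt (1 - x^2)))) /
        (r * Real.sqrt (1 - x^2))^2) x := hnum.div hden hden0
  set u := s * x / (r * Real.sqrt (1 - x^2)) with hu_def
  have hu2 : 1 - u^2 = (r^2 - x^2) / (r^2 * (1 - x^2)) := by
    rw [hu_def, div_pow, mul_pow, mul_pow, hpq, eq_div_iff (by positivity)]
    field_simp
    linear_combination (-(x^2)) * hs2
  have hu2pos : 0 < 1 - u^2 := by rw [hu2]; positivity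
  have hune1 : u ≠ 1 := by intro h; rw [h] at hu2pos; norm_num at hu2pos
  have hunem1 : u ≠ -1 := by intro h; rw [h] at hu2pos; norm_num at hu2pos
  have harc := (Real.hasDerivAt_arcsin hunem1 hune1).comp x hu
  have hsqrtu : Real.sqrt (1 - u^2) = Real.sqrt (r^2 - x^2) / (r * Real.sqrt (1 - x^2)) := by
    rw [hu2, Real.sqrt_div hq.le, Real.sqrt_mul (by positivity), Real.sqrt_sq hr0.le]
  refine harc.congr_deriv (Eq.symm ?_)
  rw [hsqrtu]
  rw [div_div_eq_mul_div, one_mul]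
  field_simp
  linear_combination (x^2) * hpq

private lemma dsm_key (r K : ℝ) (hr0 : 0 < r) (hr1 : r < 1) :
    ∫ x in (-r)..r, x ^ 2 * (Real.sqrt (1 - r ^ 2) /
        (Real.pi * (1 - x ^ 2) * Real.sqrt (r ^ 2 - x ^ 2)) * (1 - K * x)) =
      1 - Real.sqrt (1 - r ^ 2) := by
  have hr2 : 0 < 1 - r^2 := by nlinarith
  set s := Real.sqrt (1 - r^2) with hs
  have hs0 : 0 < s := Real.sqrt_pos.2 hr2
  set F : ℝ → ℝ := fun x => s / Real.pi *
      (s⁻¹ * Real.arcsin (s * x / (r * Real.sqrt (1 - x^2))) - Real.arcsin (x / r) -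
        K * (Real.sqrt (r^2 - x^2) - s⁻¹ * Real.arctan (Real.sqrt (r^2 - x^2) / s))) with hF
  set f : ℝ → ℝ := fun x => x ^ 2 * (s / (Real.pi * (1 - x ^ 2) * Real.sqrt (r ^ 2 - x ^ 2)) *
      (1 - K * x)) with hf
  have hderiv : ∀ x ∈ Set.Ioo (-r) r, HasDerivAt F (f x) x := by
    intro x hx
    obtain ⟨hx1, hx2⟩ := hx
    have hq : 0 < r^2 - x^2 := by nlinarith
    have hp : 0 < 1 - x^2 := by nlinarith
    have hq0 : Real.sqrt (r^2 - x^2) ≠ 0 := by positivity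
    have d1 := dsm_deriv_arcsin_div r x hr0 hx1 hx2
    have d2 := dsm_deriv_arcsin2 r x s hr0 hr1 hx1 hx2 hs
    have d3 := dsm_deriv_sqrt r x hr0 hx1 hx2
    have d4 := dsm_deriv_arctan r x s hr0 hr1 hx1 hx2 hs
    have hd := (((d2.const_mul s⁻¹).sub d1).sub
      ((d3.sub (d4.const_mul s⁻¹)).const_mul K)).const_mul (s / Real.pi)
    refine hd.congr_deriv (Eq.symm ?_)
    rw [hf]
    field_simp
    ring
  have hcont : ContinuousOn F (Set.Icc (-r) r) := by
    have hne : ∀ x ∈ Set.Icc (-r) r, r * Real.sqrt (1 - x^2) ≠ 0 := by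
      intro x hx
      obtain ⟨hx1, hx2⟩ := hx
      have hp : 0 < 1 - x^2 := by nlinarith
      positivity
    apply ContinuousOn.mul continuousOn_const
    apply ContinuousOn.sub
    apply ContinuousOn.sub
    · exact ContinuousOn.mul continuousOn_const
        (Real.continuous_arcsin.comp_continuousOn
          (ContinuousOn.div (continuous_const.mul continuous_id).continuousOn
            (continuous_const.mul (continuous_const.sub (continuous_pow 2)).sqrt).continuousOn
            hne))
    · exact (Real.continuous_arcsin.comp (continuous_id.div_const r)).continuousOn
    · apply ContinuousOn.mul continuousOn_const
      apply ContinuousOn.sub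
      · exact (continuous_const.sub (continuous_pow 2)).sqrt.continuousOn
      · exact ContinuousOn.mul continuousOn_const
          (Real.continuous_arctan.comp
            ((continuous_const.sub (continuous_pow 2)).sqrt.div_const s)).continuousOn
  have hint : IntervalIntegrable f MeasureTheory.volume (-r) r := by
    have hbase := dsm_integrable_inv_sqrt r hr0
    have hg : ContinuousOn (fun x => x ^ 2 * (s / (Real.pi * (1 - x^2)) * (1 - K * x)))
        (Set.uIcc (-r) r) := by
      apply ContinuousOn.mul (continuous_pow 2).continuousOn
      apply ContinuousOn.mul
      · apply ContinuousOn.div continuousOn_const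
          (continuous_const.mul (continuous_const.sub (continuous_pow 2))).continuousOn
        intro x hx
        rw [Set.uIcc_of_le (by linarith)] at hx
        obtain ⟨hx1, hx2⟩ := hx
        have hp : 0 < 1 - x^2 := by nlinarith
        exact mul_ne_zero Real.pi_ne_zero hp.ne'
      · exact (continuous_const.sub (continuous_const.mul continuous_id)).continuousOn
    have heq : f = fun x => x ^ 2 * (s / (Real.pi * (1 - x^2)) * (1 - K * x)) *
        (Real.sqrt (r^2 - x^2))⁻¹ := by
      funext x
      rw [hf]
      simp only [div_eq_mul_inv, mul_inv]
      ring
    rw [heq]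
    exact hbase.continuousOn_mul hg
  rw [intervalIntegral.integral_eq_sub_of_hasDerivAt_of_le (by linarith) hcont hderiv hint]
  have hFr : F r = s / Real.pi * (s⁻¹ * (Real.pi / 2) - Real.pi / 2) := by
    have h1 : s * r / (r * Real.sqrt (1 - r^2)) = 1 := by
      rw [← hs]; field_simp
    have h2 : r^2 - r^2 = 0 := by ring
    simp only [hF]
    rw [h1, Real.arcsin_one, div_self hr0.ne', Real.arcsin_one, h2, Real.sqrt_zero,
      zero_div, Real.arctan_zero]
    ring
  have hFmr : F (-r) = s / Real.pi * (s⁻¹ * (-(Real.pi / 2)) + Real.pi / 2) := by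
    have h0 : (-r:ℝ)^2 = r^2 := by ring
    have h1 : s * (-r) / (r * Real.sqrt (1 - (-r)^2)) = -1 := by
      rw [h0, ← hs]; field_simp
    have h2 : r^2 - r^2 = 0 := by ring
    simp only [hF]
    rw [h1, Real.arcsin_neg_one, h0, h2, neg_div, div_self hr0.ne', Real.arcsin_neg,
      Real.arcsin_one, Real.sqrt_zero, zero_div, Real.arctan_zero]
    ring
  rw [hFr, hFmr]
  have hpi : Real.pi ≠ 0 := Real.pi_ne_zero
  field_simp
  ring

end Aux

/-- The second moment of the limit density: `∫ x² f(x;φ) dx = 1 - √(1-|a|²)`;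
in particular it does not depend on `φ`. -/
theorem density_second_moment (a b c d : ℂ)
    (hU : !![a, b; c, d] ∈ Matrix.unitaryGroup (Fin 2) ℂ)
    (habcd : a * b * c * d ≠ 0)
    (α β : ℂ) (hφ : ‖α‖ ^ 2 + ‖β‖ ^ 2 = 1) :
    ∫ x in (-(‖a‖))..(‖a‖),
        x ^ 2 * (Real.sqrt (1 - ‖a‖ ^ 2) /
            (Real.pi * (1 - x ^ 2) * Real.sqrt (‖a‖ ^ 2 - x ^ 2)) *
          (1 - (‖α‖ ^ 2 - ‖β‖ ^ 2 +
            (a * α * (starRingEnd ℂ) (b * β) +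
              (starRingEnd ℂ) (a * α) * (b * β)).re / ‖a‖ ^ 2) * x)) =
      1 - Real.sqrt (1 - ‖a‖ ^ 2) := by
  have ha : a ≠ 0 := by intro h; simp [h] at habcd
  have hb : b ≠ 0 := by intro h; simp [h] at habcd
  have h := (Matrix.mem_unitaryGroup_iff.mp hU)
  have h00 := congrArg (fun M => M 0 0) h
  simp [Matrix.mul_apply, Fin.sum_univ_two, Matrix.one_apply, Complex.mul_conj] at h00
  have h00' : ‖a‖ ^ 2 + ‖b‖ ^ 2 = 1 := by
    have := congrArg Complex.re h00
    simpa [Complex.normSq_eq_norm_sq, ← Complex.ofReal_pow] using this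
  have hr0 : 0 < ‖a‖ := norm_pos_iff.mpr ha
  have hr1 : ‖a‖ < 1 := by
    nlinarith [norm_pos_iff.mpr hb, norm_nonneg a]
  exact dsm_key (‖a‖) _ hr0 hr1
end
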